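/- arXiv:1711.03340 — 12 statements merged into one kernel-verified Lean document; each statement's English description precedes it below -/
import Mathlib

section
/- For all n ≥ 0, the generating polynomial of even-sum subsets satisfies e_{2n}(x) = ((1+x)^{2n} + (1-x^2)^n)/2 and e_{2n+1}(x) = ((1+x)^{2n+1} + (1-x)(1-x^2)^n)/2. -/
def evenCount (n k : ℕ) : ℕ :=
  ((Finset.Icc 1 n).powerset.filter (fun S => S.card = k ∧ Even (S.sum id))).card

def oddCount (n k : ℕ) : ℕ :=
  ((Finset.Icc 1 n).powerset.filter (fun S => S.card = k ∧ Odd (S.sum id))).card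

noncomputable def ePoly (n : ℕ) : Polynomial ℚ :=
  ∑ k ∈ Finset.range (n + 1), (evenCount n k : ℚ) • Polynomial.X ^ k

open Polynomial Finset

lemma ePoly_eq (n : ℕ) :
    ePoly n = ∑ T ∈ (Icc 1 n).powerset.filter (fun S => Even (S.sum id)),
      (X : ℚ[X]) ^ T.card := by
  rw [← Finset.sum_fiberwise_of_maps_to (g := Finset.card) (t := Finset.range (n+1))
    (fun T hT => by
      simp only [mem_filter, mem_powerset] at hT
      exact Finset.mem_range.mpr (Nat.lt_succ_of_le
        ((card_le_card hT.1).trans (by simp [Nat.card_Icc]))))]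
  unfold ePoly evenCount
  refine Finset.sum_congr rfl fun k _ => ?_
  rw [Finset.filter_filter]
  have hset : (Icc 1 n).powerset.filter (fun S => Even (S.sum id) ∧ S.card = k)
      = (Icc 1 n).powerset.filter (fun S => S.card = k ∧ Even (S.sum id)) := by
    apply Finset.filter_congr; intro S _; exact and_comm
  have hsum : ∑ T ∈ (Icc 1 n).powerset.filter (fun S => S.card = k ∧ Even (S.sum id)),
      (X : ℚ[X]) ^ T.card
      = ∑ _T ∈ (Icc 1 n).powerset.filter (fun S => S.card = k ∧ Even (S.sum id)),
      (X : ℚ[X]) ^ k :=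
    Finset.sum_congr rfl fun T hT => by rw [(Finset.mem_filter.mp hT).2.1]
  rw [hset, hsum, Finset.sum_const, nsmul_eq_mul, Polynomial.smul_eq_C_mul]
  simp

lemma sum_pow_card (n : ℕ) :
    ∑ T ∈ (Icc 1 n).powerset, (X : ℚ[X]) ^ T.card = (1 + X) ^ n := by
  have := Finset.prod_add (fun _ : ℕ => (X : ℚ[X])) (fun _ => 1) (Icc 1 n)
  simp only [prod_const_one, mul_one, prod_const] at this
  rw [← this]
  simp [Nat.card_Icc, add_comm]

lemma prod_sign_expand (n : ℕ) :
    ∏ i ∈ Icc 1 n, ((-1:ℚ[X])^i * X + 1)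
      = ∑ T ∈ (Icc 1 n).powerset, (-1:ℚ[X])^(T.sum id) * X ^ T.card := by
  have := Finset.prod_add (fun i : ℕ => (-1:ℚ[X])^i * X) (fun _ => 1) (Icc 1 n)
  simp only [prod_const_one, mul_one] at this
  rw [this]
  refine Finset.sum_congr rfl fun T _ => ?_
  rw [Finset.prod_mul_distrib, prod_const, Finset.prod_pow_eq_pow_sum]
  congr 1

lemma two_ePoly (n : ℕ) :
    (2 : ℚ[X]) * ePoly n
      = (1 + X)^n + ∏ i ∈ Icc 1 n, ((-1:ℚ[X])^i * X + 1) := by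
  rw [← sum_pow_card, prod_sign_expand, ePoly_eq, Finset.mul_sum, ← Finset.sum_add_distrib]
  rw [← Finset.sum_filter_add_sum_filter_not ((Icc 1 n).powerset) (fun S => Even (S.sum id))
    (fun T => (X:ℚ[X])^T.card + (-1:ℚ[X])^(T.sum id) * X ^ T.card)]
  have h1 : ∀ T ∈ (Icc 1 n).powerset.filter (fun S => Even (S.sum id)),
      (X:ℚ[X])^T.card + (-1:ℚ[X])^(T.sum id) * X ^ T.card = 2 * (X:ℚ[X])^T.card := by
    intro T hT
    simp only [mem_filter] at hT
    rw [hT.2.neg_one_pow]; ring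
  have h2 : ∀ T ∈ (Icc 1 n).powerset.filter (fun S => ¬ Even (S.sum id)),
      (X:ℚ[X])^T.card + (-1:ℚ[X])^(T.sum id) * X ^ T.card = 0 := by
    intro T hT
    simp only [mem_filter] at hT
    rw [(Nat.not_even_iff_odd.mp hT.2).neg_one_pow]; ring
  rw [Finset.sum_congr rfl h1, Finset.sum_congr rfl h2, Finset.sum_const_zero, add_zero]

lemma prod_sign_even (n : ℕ) :
    ∏ i ∈ Icc 1 (2 * n), ((-1:ℚ[X])^i * X + 1) = (1 - X^2)^n := by
  induction n with
  | zero => simp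
  | succ m ih =>
    have h1 : Icc 1 (2*(m+1)) = insert (2*m+2) (insert (2*m+1) (Icc 1 (2*m))) := by
      ext x; simp only [mem_Icc, mem_insert]; omega
    rw [h1, Finset.prod_insert (by simp only [mem_insert, mem_Icc]; omega),
      Finset.prod_insert (by simp only [mem_Icc]; omega), ih]
    have he : ((-1:ℚ[X]))^(2*m+2) = 1 := Even.neg_one_pow ⟨m+1, by ring⟩
    have ho : ((-1:ℚ[X]))^(2*m+1) = -1 := Odd.neg_one_pow ⟨m, by ring⟩
    rw [he, ho]; ring

lemma prod_sign_odd (n : ℕ) :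
    ∏ i ∈ Icc 1 (2 * n + 1), ((-1:ℚ[X])^i * X + 1) = (1 - X) * (1 - X^2)^n := by
  have h1 : Icc 1 (2*n+1) = insert (2*n+1) (Icc 1 (2*n)) := by
    ext x; simp only [mem_Icc, mem_insert]; omega
  rw [h1, Finset.prod_insert (by simp only [mem_Icc]; omega), prod_sign_even]
  have ho : ((-1:ℚ[X]))^(2*n+1) = -1 := Odd.neg_one_pow ⟨n, by ring⟩
  rw [ho]; ring

lemma half_of_two_mul (p q : ℚ[X]) (h : 2 * p = q) : p = C (1/2 : ℚ) * q := by
  have h2 : (2 : ℚ[X]) = C 2 := by rw [show ((2:ℚ)) = ((2:ℕ):ℚ) by norm_num, C_eq_natCast]; norm_num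
  rw [← h, ← mul_assoc, h2, ← C_mul]
  norm_num

open Polynomial in
theorem stmt_2 (n : ℕ) :
    ePoly (2 * n) = C (1 / 2 : ℚ) * ((1 + X) ^ (2 * n) + (1 - X ^ 2) ^ n) ∧
    ePoly (2 * n + 1) =
      C (1 / 2 : ℚ) * ((1 + X) ^ (2 * n + 1) + (1 - X) * (1 - X ^ 2) ^ n) := by
  constructor
  · exact half_of_two_mul _ _ (by rw [two_ePoly, prod_sign_even])
  · exact half_of_two_mul _ _ (by rw [two_ePoly, prod_sign_odd])
end

section
/- For all n, k ≥ 0, e(n,k) = Σ_j C(⌈n/2⌉, 2j) · C(⌊n/2⌋, k−2j), where the sum ranges over all integers j with 0 ≤ 2j ≤ k. -/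
open Finset

lemma sum_parity (S : Finset ℕ) : Even (S.sum id) ↔ Even ((S.filter (fun x => Odd x)).card) := by
  have h1 : (∑ x ∈ S, x % 2) = (S.filter (fun x => Odd x)).card := by
    rw [Finset.card_filter]
    refine Finset.sum_congr rfl ?_
    intro x _
    rcases Nat.even_or_odd x with h | h
    · simp [Nat.even_iff.mp h, h, Nat.not_odd_iff_even.mpr h]
    · simp [Nat.odd_iff.mp h, h]
  have h2 : S.sum id % 2 = (∑ x ∈ S, x % 2) % 2 := Finset.sum_nat_mod S 2 id
  rw [h1] at h2
  rw [Nat.even_iff, Nat.even_iff]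
  omega

lemma card_odds_evens (n : ℕ) :
    (((Finset.Icc 1 n).filter (fun x => Odd x)).card = (n + 1) / 2) ∧
    (((Finset.Icc 1 n).filter (fun x => ¬ Odd x)).card = n / 2) := by
  induction n with
  | zero => simp
  | succ n ih =>
    have hins : Finset.Icc 1 (n + 1) = insert (n + 1) (Finset.Icc 1 n) := by
      exact (Finset.insert_Icc_right_eq_Icc_add_one (by omega)).symm
    have hnot : (n + 1) ∉ Finset.Icc 1 n := by simp
    constructor
    · rw [hins, Finset.filter_insert]
      rcases Nat.even_or_odd (n + 1) with h | h
      · rw [if_neg (Nat.not_odd_iff_even.mpr h)]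
        have := Nat.even_iff.mp h
        omega
      · rw [if_pos h, Finset.card_insert_of_notMem (fun hm => hnot (Finset.mem_filter.mp hm).1)]
        have := Nat.odd_iff.mp h
        omega
    · rw [hins, Finset.filter_insert]
      rcases Nat.even_or_odd (n + 1) with h | h
      · rw [if_pos (Nat.not_odd_iff_even.mpr h),
          Finset.card_insert_of_notMem (fun hm => hnot (Finset.mem_filter.mp hm).1)]
        have := Nat.even_iff.mp h
        omega
      · rw [if_neg (fun hh => hh h)]
        have := Nat.odd_iff.mp h
        omega

theorem stmt_4 (n k : ℕ) :
    evenCount n k =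
      ∑ j ∈ Finset.range (k / 2 + 1),
        ((n + 1) / 2).choose (2 * j) * (n / 2).choose (k - 2 * j) := by
  classical
  set O : Finset ℕ := (Finset.Icc 1 n).filter (fun x => Odd x) with hO
  set E : Finset ℕ := (Finset.Icc 1 n).filter (fun x => ¬ Odd x) with hE
  obtain ⟨hOc, hEc⟩ := card_odds_evens n
  set T : Finset (Finset ℕ) :=
    (Finset.Icc 1 n).powerset.filter (fun S => S.card = k ∧ Even (S.sum id)) with hT
  have hfib : T.card = ∑ j ∈ Finset.range (k / 2 + 1),
      (T.filter (fun S => (S.filter (fun x => Odd x)).card / 2 = j)).card := by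
    apply Finset.card_eq_sum_card_fiberwise
    intro S hS
    rw [Finset.mem_coe, Finset.mem_filter] at hS
    have hle : (S.filter (fun x => Odd x)).card ≤ k := by
      calc (S.filter (fun x => Odd x)).card ≤ S.card := Finset.card_filter_le _ _
        _ = k := hS.2.1
    simp only [Finset.mem_coe, Finset.mem_range]
    have := Nat.div_le_div_right (c := 2) hle
    omega
  rw [show evenCount n k = T.card from rfl, hfib]
  refine Finset.sum_congr rfl ?_
  intro j hj
  rw [Finset.mem_range] at hj
  have h2j : 2 * j ≤ k := by omega
  -- rewrite the fiber condition
  have hfil : T.filter (fun S => (S.filter (fun x => Odd x)).card / 2 = j)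
      = T.filter (fun S => (S.filter (fun x => Odd x)).card = 2 * j) := by
    apply Finset.filter_congr
    intro S hS
    rw [hT, Finset.mem_filter] at hS
    have hev : Even ((S.filter (fun x => Odd x)).card) := (sum_parity S).mp hS.2.2
    obtain ⟨m, hm⟩ := hev
    simp only [hm]
    omega
  rw [hfil, ← hOc, ← hEc, ← Finset.card_powersetCard, ← Finset.card_powersetCard,
    ← Finset.card_product]
  refine Finset.card_bij'
    (fun S _ => (S.filter (fun x => Odd x), S.filter (fun x => ¬ Odd x)))
    (fun p _ => p.1 ∪ p.2) ?hi ?hj ?li ?ri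
  case hi =>
    intro S hS
    rw [Finset.mem_filter, hT, Finset.mem_filter, Finset.mem_powerset] at hS
    obtain ⟨⟨hsub, hcard, hev⟩, hodd⟩ := hS
    rw [Finset.mem_product, Finset.mem_powersetCard, Finset.mem_powersetCard]
    refine ⟨⟨Finset.filter_subset_filter _ hsub, hodd⟩,
      Finset.filter_subset_filter _ hsub, ?_⟩
    show (S.filter (fun x => ¬ Odd x)).card = k - 2 * j
    have := Finset.card_filter_add_card_filter_not (s := S) (fun x => Odd x)
    omega
  case hj =>
    intro p hp
    rw [Finset.mem_product, Finset.mem_powersetCard, Finset.mem_powersetCard] at hp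
    obtain ⟨⟨h1s, h1c⟩, h2s, h2c⟩ := hp
    have hp1odd : ∀ x ∈ p.1, Odd x := fun x hx => (Finset.mem_filter.mp (h1s hx)).2
    have hp2even : ∀ x ∈ p.2, ¬ Odd x := fun x hx => (Finset.mem_filter.mp (h2s hx)).2
    have hdisj : Disjoint p.1 p.2 := by
      rw [Finset.disjoint_left]
      intro x hx1 hx2
      exact hp2even x hx2 (hp1odd x hx1)
    have hfo : (p.1 ∪ p.2).filter (fun x => Odd x) = p.1 := by
      rw [Finset.filter_union, Finset.filter_true_of_mem hp1odd,
        Finset.filter_false_of_mem hp2even, Finset.union_empty]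
    rw [Finset.mem_filter, hT, Finset.mem_filter, Finset.mem_powerset]
    refine ⟨⟨Finset.union_subset (h1s.trans (Finset.filter_subset _ _))
        (h2s.trans (Finset.filter_subset _ _)), ?_, ?_⟩, ?_⟩
    · rw [Finset.card_union_of_disjoint hdisj, h1c, h2c]; omega
    · rw [sum_parity, hfo, h1c]; exact ⟨j, by ring⟩
    · rw [hfo, h1c]
  case li =>
    intro S _
    exact Finset.filter_union_filter_not_eq _ S
  case ri =>
    intro p hp
    rw [Finset.mem_product, Finset.mem_powersetCard, Finset.mem_powersetCard] at hp
    obtain ⟨⟨h1s, _⟩, h2s, _⟩ := hp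
    have hp1odd : ∀ x ∈ p.1, Odd x := fun x hx => (Finset.mem_filter.mp (h1s hx)).2
    have hp2even : ∀ x ∈ p.2, ¬ Odd x := fun x hx => (Finset.mem_filter.mp (h2s hx)).2
    have hfo : (p.1 ∪ p.2).filter (fun x => Odd x) = p.1 := by
      rw [Finset.filter_union, Finset.filter_true_of_mem hp1odd,
        Finset.filter_false_of_mem hp2even, Finset.union_empty]
    have hfe : (p.1 ∪ p.2).filter (fun x => ¬ Odd x) = p.2 := by
      rw [Finset.filter_union, Finset.filter_false_of_mem (fun x hx => not_not_intro (hp1odd x hx)),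
        Finset.filter_true_of_mem hp2even, Finset.empty_union]
    rw [hfo, hfe]
end

section
/- For all n ≥ 0, the number of n-subsets of {1,...,2n} with even sum equals Σ_k C(n,2k)^2. -/
open Finset

lemma count_split (A B : Finset ℕ) (h : Disjoint A B) (j m : ℕ) :
    (((A ∪ B).powerset).filter (fun S => (S ∩ A).card = j ∧ (S ∩ B).card = m)).card
      = A.card.choose j * B.card.choose m := by
  rw [← Finset.card_powersetCard, ← Finset.card_powersetCard, ← Finset.card_product]
  apply Finset.card_bij' (fun S _ => (S ∩ A, S ∩ B)) (fun P _ => P.1 ∪ P.2)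
  · intro S hS
    simp only [mem_filter, mem_powerset] at hS
    simp only [mem_product, mem_powersetCard]
    exact ⟨⟨inter_subset_right, hS.2.1⟩, ⟨inter_subset_right, hS.2.2⟩⟩
  · intro P hP
    simp only [mem_product, mem_powersetCard] at hP
    have d1 : Disjoint P.2 A := h.symm.mono_left hP.2.1
    have d2 : Disjoint P.1 B := h.mono_left hP.1.1
    have e1 : (P.1 ∪ P.2) ∩ A = P.1 := by
      rw [union_inter_distrib_right, inter_eq_left.mpr hP.1.1,
        Finset.disjoint_iff_inter_eq_empty.mp d1, union_empty]
    have e2 : (P.1 ∪ P.2) ∩ B = P.2 := by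
      rw [union_inter_distrib_right, inter_eq_left.mpr hP.2.1,
        Finset.disjoint_iff_inter_eq_empty.mp d2, empty_union]
    simp only [mem_filter, mem_powerset, e1, e2]
    exact ⟨union_subset_union hP.1.1 hP.2.1, hP.1.2, hP.2.2⟩
  · intro S hS
    simp only [mem_filter, mem_powerset] at hS
    rw [← inter_union_distrib_left, inter_eq_left.mpr hS.1]
  · intro P hP
    simp only [mem_product, mem_powersetCard] at hP
    have d1 : Disjoint P.2 A := h.symm.mono_left hP.2.1
    have d2 : Disjoint P.1 B := h.mono_left hP.1.1
    have e1 : (P.1 ∪ P.2) ∩ A = P.1 := by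
      rw [union_inter_distrib_right, inter_eq_left.mpr hP.1.1,
        Finset.disjoint_iff_inter_eq_empty.mp d1, union_empty]
    have e2 : (P.1 ∪ P.2) ∩ B = P.2 := by
      rw [union_inter_distrib_right, inter_eq_left.mpr hP.2.1,
        Finset.disjoint_iff_inter_eq_empty.mp d2, empty_union]
    exact Prod.ext e1 e2

lemma card_odd_part (n : ℕ) :
    (((Finset.Icc 1 (2*n))).filter (fun x => ¬ Even x)).card = n := by
  have : ((Finset.Icc 1 (2*n))).filter (fun x => ¬ Even x)
      = (Finset.range n).image (fun i => 2*i+1) := by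
    ext x
    simp only [mem_filter, mem_Icc, mem_image, mem_range, Nat.even_iff]
    constructor
    · rintro ⟨⟨h1, h2⟩, h3⟩
      exact ⟨(x-1)/2, by omega, by omega⟩
    · rintro ⟨i, hi, rfl⟩
      omega
  rw [this, Finset.card_image_of_injective _ (fun a b h => by omega), Finset.card_range]

lemma card_even_part (n : ℕ) :
    (((Finset.Icc 1 (2*n))).filter (fun x => Even x)).card = n := by
  have : ((Finset.Icc 1 (2*n))).filter (fun x => Even x)
      = (Finset.range n).image (fun i => 2*i+2) := by
    ext x
    simp only [mem_filter, mem_Icc, mem_image, mem_range, Nat.even_iff]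
    constructor
    · rintro ⟨⟨h1, h2⟩, h3⟩
      exact ⟨(x-2)/2, by omega, by omega⟩
    · rintro ⟨i, hi, rfl⟩
      omega
  rw [this, Finset.card_image_of_injective _ (fun a b h => by omega), Finset.card_range]

theorem stmt_5 (n : ℕ) :
    evenCount (2 * n) n = ∑ k ∈ Finset.range (n / 2 + 1), (n.choose (2 * k)) ^ 2 := by
  classical
  unfold evenCount
  set A := ((Finset.Icc 1 (2*n))).filter (fun x => ¬ Even x) with hAdef
  set B := ((Finset.Icc 1 (2*n))).filter (fun x => Even x) with hBdef
  have hA : A.card = n := card_odd_part n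
  have hB : B.card = n := card_even_part n
  have hdis : Disjoint A B := (disjoint_filter_filter_not _ _ _).symm
  have hAB : A ∪ B = Finset.Icc 1 (2*n) := by
    rw [union_comm]; exact filter_union_filter_not_eq _ _
  -- key facts about S ⊆ Icc
  have interA : ∀ S : Finset ℕ, S ⊆ Finset.Icc 1 (2*n) →
      S ∩ A = S.filter (fun x => ¬ Even x) := by
    intro S hS
    rw [hAdef, inter_filter, inter_eq_left.mpr hS]
  have parity : ∀ S : Finset ℕ, S ⊆ Finset.Icc 1 (2*n) →
      (Even (S.sum id) ↔ Even (S ∩ A).card) := by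
    intro S hS
    rw [interA S hS, Finset.even_sum_iff_even_card_odd]
    have : (S.filter (fun i => Odd (id i))) = S.filter (fun x => ¬ Even x) :=
      Finset.filter_congr (fun x _ => by simp [Nat.not_even_iff_odd])
    rw [this]
  have cardsplit : ∀ S : Finset ℕ, S ⊆ Finset.Icc 1 (2*n) →
      S.card = (S ∩ A).card + (S ∩ B).card := by
    intro S hS
    rw [interA S hS, hBdef, inter_filter, inter_eq_left.mpr hS, add_comm]
    exact (Finset.card_filter_add_card_filter_not (p := fun x => Even x)).symm
  rw [Finset.card_eq_sum_card_fiberwise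
    (f := fun S => (S ∩ A).card) (t := Finset.range (n+1))
    (fun S hS => by
      simp only [mem_coe, mem_filter, mem_powerset] at hS
      rw [mem_coe, mem_range]
      show (S ∩ A).card < n + 1
      have : (S ∩ A).card ≤ S.card := Finset.card_le_card Finset.inter_subset_left
      omega)]
  have step : ∀ j ∈ Finset.range (n+1),
      ((((Finset.Icc 1 (2*n)).powerset.filter
          (fun S => S.card = n ∧ Even (S.sum id))).filter
          (fun S => (S ∩ A).card = j)).card)
        = if Even j then n.choose j * n.choose (n-j) else 0 := by
    intro j hj
    rw [mem_range] at hj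
    by_cases hev : Even j
    · rw [if_pos hev]
      have : ((Finset.Icc 1 (2*n)).powerset.filter
            (fun S => S.card = n ∧ Even (S.sum id))).filter
            (fun S => (S ∩ A).card = j)
          = ((A ∪ B).powerset).filter (fun S => (S ∩ A).card = j ∧ (S ∩ B).card = n - j) := by
        ext S
        simp only [mem_filter, mem_powerset, hAB, and_assoc]
        constructor
        · rintro ⟨h1, h2, h3, h4⟩
          refine ⟨h1, h4, ?_⟩
          have := cardsplit S h1
          omega
        · rintro ⟨h1, h2, h3⟩
          have hc := cardsplit S h1
          refine ⟨h1, by omega, ?_, h2⟩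
          rw [parity S h1, h2]
          exact hev
      rw [this, count_split A B hdis, hA, hB]
    · rw [if_neg hev]
      rw [Finset.card_eq_zero, Finset.eq_empty_iff_forall_notMem]
      intro S hS
      simp only [mem_filter, mem_powerset] at hS
      obtain ⟨⟨hsub, hcard, hsum⟩, hfib⟩ := hS
      exact hev (hfib ▸ (parity S hsub).mp hsum)
  rw [Finset.sum_congr rfl step, ← Finset.sum_filter]
  refine Finset.sum_nbij' (fun j => j / 2) (fun k => 2 * k) ?_ ?_ ?_ ?_ ?_
  · intro j hj
    simp only [mem_filter, mem_range, Nat.even_iff] at hj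
    simp only [mem_range]; omega
  · intro k hk
    simp only [mem_range] at hk
    simp only [mem_filter, mem_range, Nat.even_iff]
    omega
  · intro j hj
    simp only [mem_filter, mem_range, Nat.even_iff] at hj
    omega
  · intro k hk
    omega
  · intro j hj
    simp only [mem_filter, mem_range, Nat.even_iff] at hj
    have h2 : 2 * (j / 2) = j := by omega
    rw [h2, Nat.choose_symm (by omega), sq]
end

section
/- If n ≡ 0 or 3 (mod 4), then e(n, n−k) = e(n,k) for all 0 ≤ k ≤ n; i.e., the polynomial e_n(x) is palindromic. -/
lemma sum_Icc_even (n : ℕ) (hn : n % 4 = 0 ∨ n % 4 = 3) :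
    Even ((Finset.Icc 1 n).sum id) := by
  have h2 : ((Finset.Icc 1 n).sum id) * 2 = (n + 1) * n := by
    have h := Finset.sum_range_id_mul_two (n + 1)
    simp only [Nat.add_sub_cancel] at h
    rw [← h]
    congr 1
    rw [Finset.range_eq_Ico, ← Finset.Ico_add_one_right_eq_Icc]
    rw [← Finset.sum_Ico_consecutive (fun i => i) (Nat.zero_le 1) (show 1 ≤ n + 1 by omega)]
    simp [Nat.succ_eq_add_one]
  obtain ⟨t, ht⟩ : ∃ t, ((Finset.Icc 1 n).sum id) = 2 * t := by
    rcases hn with h | h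
    · obtain ⟨m, hm⟩ : ∃ m, n = 4 * m := ⟨n / 4, by omega⟩
      have h4 : ((Finset.Icc 1 n).sum id) * 2 = 4 * ((n + 1) * m) := by rw [h2, hm]; ring
      exact ⟨(n + 1) * m, by omega⟩
    · obtain ⟨m, hm⟩ : ∃ m, n + 1 = 4 * m := ⟨(n + 1) / 4, by omega⟩
      have h4 : ((Finset.Icc 1 n).sum id) * 2 = 4 * (m * n) := by rw [h2, hm]; ring
      exact ⟨m * n, by omega⟩
  exact ⟨t, by omega⟩

lemma compl_mem (n : ℕ) (hn : n % 4 = 0 ∨ n % 4 = 3) (a b : ℕ) (hab : a + b = n) :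
    ∀ S ∈ (Finset.Icc 1 n).powerset.filter (fun S => S.card = a ∧ Even (S.sum id)),
      Finset.Icc 1 n \ S ∈
        (Finset.Icc 1 n).powerset.filter (fun S => S.card = b ∧ Even (S.sum id)) := by
  intro S hS
  simp only [Finset.mem_filter, Finset.mem_powerset] at hS ⊢
  obtain ⟨hsub, hcard, heven⟩ := hS
  have hsd : (Finset.Icc 1 n \ S).sum id + S.sum id = (Finset.Icc 1 n).sum id :=
    Finset.sum_sdiff hsub
  have htot := sum_Icc_even n hn
  refine ⟨Finset.sdiff_subset, ?_, ?_⟩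
  · rw [Finset.card_sdiff_of_subset hsub, Nat.card_Icc, hcard]; omega
  · rw [← hsd] at htot
    rcases Nat.even_add.mp htot with h
    exact h.mpr heven

theorem stmt_6 (n : ℕ) (hn : n % 4 = 0 ∨ n % 4 = 3) (k : ℕ) (hk : k ≤ n) :
    evenCount n (n - k) = evenCount n k := by
  classical
  unfold evenCount
  refine Finset.card_bij' (fun S _ => Finset.Icc 1 n \ S) (fun S _ => Finset.Icc 1 n \ S)
    (compl_mem n hn (n - k) k (by omega)) (compl_mem n hn k (n - k) (by omega)) ?_ ?_
  · intro S hS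
    simp only [Finset.mem_filter, Finset.mem_powerset] at hS
    exact Finset.sdiff_sdiff_eq_self hS.1
  · intro S hS
    simp only [Finset.mem_filter, Finset.mem_powerset] at hS
    exact Finset.sdiff_sdiff_eq_self hS.1
end

section
/- Define L(n,k) by the recursion L(n,k) = L(n−2,k) + C(n−2,k−1) + L(n−2,k−2) with L(0,k) = [k=0], L(1,k) = [0 ≤ k ≤ 1], and L(n,k) = 0 for k < 0. Then L(n,k) = e(n,k) when k ≡ 0 or 3 (mod 4), and L(n,k) = o(n,k) when k ≡ 1 or 2 (mod 4). -/
def losanitsch : ℕ → ℕ → ℕ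
  | 0, k => if k = 0 then 1 else 0
  | 1, k => if k ≤ 1 then 1 else 0
  | n + 2, k =>
      losanitsch n k + (if k = 0 then 0 else n.choose (k - 1)) +
        (if 2 ≤ k then losanitsch n (k - 2) else 0)

lemma count_insert {a : ℕ} {s : Finset ℕ} (ha : a ∉ s) (p : Finset ℕ → Prop) [DecidablePred p] :
    ((insert a s).powerset.filter p).card
      = (s.powerset.filter p).card + (s.powerset.filter (fun t => p (insert a t))).card := by
  rw [Finset.powerset_insert, Finset.filter_union, Finset.card_union_of_disjoint, Finset.filter_image,
    Finset.card_image_of_injOn]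
  · intro t ht u hu h
    simp only [Finset.mem_coe, Finset.mem_filter, Finset.mem_powerset] at ht hu
    have hat : a ∉ t := fun h' => ha (ht.1 h')
    have hau : a ∉ u := fun h' => ha (hu.1 h')
    rw [← Finset.erase_insert hat, ← Finset.erase_insert hau, h]
  · rw [Finset.disjoint_left]
    intro t ht ht'
    simp only [Finset.mem_filter, Finset.mem_powerset, Finset.mem_image] at ht ht'
    obtain ⟨u, hu, rfl⟩ := ht'.1
    exact ha (ht.1 (Finset.mem_insert_self a u))

lemma pair_count (n j : ℕ) :
    ((Finset.Icc 1 n).powerset.filter (fun S => S.card = j ∧ Even (n + 1 + S.sum id))).card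
      + ((Finset.Icc 1 n).powerset.filter (fun S => S.card = j ∧ Even (n + 2 + S.sum id))).card
      = n.choose j := by
  have h1 : ((Finset.Icc 1 n).powerset.filter (fun S => S.card = j ∧ Even (n + 1 + S.sum id)))
      = ((Finset.Icc 1 n).powerset.filter (fun S => S.card = j)).filter
        (fun S => Even (n + 1 + S.sum id)) := by
    rw [Finset.filter_filter]
  have h2 : ((Finset.Icc 1 n).powerset.filter (fun S => S.card = j ∧ Even (n + 2 + S.sum id)))
      = ((Finset.Icc 1 n).powerset.filter (fun S => S.card = j)).filter
        (fun S => ¬ Even (n + 1 + S.sum id)) := by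
    rw [Finset.filter_filter]
    apply Finset.filter_congr
    intro S _
    constructor
    · rintro ⟨h, h'⟩
      refine ⟨h, ?_⟩
      rw [show n + 2 + S.sum id = (n + 1 + S.sum id) + 1 by ring] at h'
      simp [Nat.even_add_one] at h'
      simp [h']
    · rintro ⟨h, h'⟩
      refine ⟨h, ?_⟩
      rw [show n + 2 + S.sum id = (n + 1 + S.sum id) + 1 by ring]
      simpa [Nat.even_add_one] using h'
  rw [h1, h2, Finset.card_filter_add_card_filter_not]
  rw [← Finset.powersetCard_eq_filter, Finset.card_powersetCard, Nat.card_Icc]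
  simp

lemma pair_count_odd (n j : ℕ) :
    ((Finset.Icc 1 n).powerset.filter (fun S => S.card = j ∧ Odd (n + 1 + S.sum id))).card
      + ((Finset.Icc 1 n).powerset.filter (fun S => S.card = j ∧ Odd (n + 2 + S.sum id))).card
      = n.choose j := by
  have h1 : ((Finset.Icc 1 n).powerset.filter (fun S => S.card = j ∧ Odd (n + 1 + S.sum id)))
      = ((Finset.Icc 1 n).powerset.filter (fun S => S.card = j ∧ Even (n + 2 + S.sum id))) := by
    apply Finset.filter_congr
    intro S _
    have : n + 2 + S.sum id = (n + 1 + S.sum id) + 1 := by ring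
    rw [this, Nat.even_add_one, Nat.even_iff, Nat.odd_iff]
    omega
  have h2 : ((Finset.Icc 1 n).powerset.filter (fun S => S.card = j ∧ Odd (n + 2 + S.sum id)))
      = ((Finset.Icc 1 n).powerset.filter (fun S => S.card = j ∧ Even (n + 1 + S.sum id))) := by
    apply Finset.filter_congr
    intro S _
    have : n + 2 + S.sum id = (n + 1 + S.sum id) + 1 := by ring
    rw [this, Nat.odd_add_one, Nat.even_iff, Nat.odd_iff]
    omega
  rw [h1, h2, Nat.add_comm]
  exact pair_count n j

lemma e_rec (n k : ℕ) :
    evenCount (n + 2) k = evenCount n k + (if k = 0 then 0 else n.choose (k - 1)) +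
      (if 2 ≤ k then oddCount n (k - 2) else 0) := by
  have h1 : (n + 1 : ℕ) ∉ Finset.Icc 1 n := by simp
  have h2 : (n + 2 : ℕ) ∉ insert (n + 1) (Finset.Icc 1 n) := by
    simp only [Finset.mem_insert, Finset.mem_Icc]
    omega
  have hicc : Finset.Icc 1 (n + 2) = insert (n + 2) (insert (n + 1) (Finset.Icc 1 n)) := by
    show Finset.Icc 1 (n + 1 + 1) = insert (n + 1 + 1) (insert (n + 1) (Finset.Icc 1 n))
    rw [← Finset.insert_Icc_right_eq_Icc_add_one (by omega : (1:ℕ) ≤ n + 1 + 1),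
      ← Finset.insert_Icc_right_eq_Icc_add_one (by omega : (1:ℕ) ≤ n + 1)]
  rw [evenCount, hicc, count_insert h2, count_insert h1, count_insert h1]
  -- simplify term B
  have hB : ((Finset.Icc 1 n).powerset.filter
        (fun t => (insert (n + 1) t).card = k ∧ Even ((insert (n + 1) t).sum id))).card
      = ((Finset.Icc 1 n).powerset.filter
        (fun t => t.card + 1 = k ∧ Even (n + 1 + t.sum id))).card := by
    congr 1
    apply Finset.filter_congr
    intro t ht
    simp only [Finset.mem_powerset] at ht
    have hnt : (n + 1 : ℕ) ∉ t := fun h => h1 (ht h)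
    rw [Finset.card_insert_of_notMem hnt, Finset.sum_insert hnt]
    simp
  have hC : ((Finset.Icc 1 n).powerset.filter
        (fun t => (insert (n + 2) t).card = k ∧ Even ((insert (n + 2) t).sum id))).card
      = ((Finset.Icc 1 n).powerset.filter
        (fun t => t.card + 1 = k ∧ Even (n + 2 + t.sum id))).card := by
    congr 1
    apply Finset.filter_congr
    intro t ht
    simp only [Finset.mem_powerset] at ht
    have hnt : (n + 2 : ℕ) ∉ t := by
      intro h
      have := ht h
      simp only [Finset.mem_Icc] at this
      omega
    rw [Finset.card_insert_of_notMem hnt, Finset.sum_insert hnt]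
    simp
  have hD : ((Finset.Icc 1 n).powerset.filter
        (fun t => (insert (n + 2) (insert (n + 1) t)).card = k ∧
          Even ((insert (n + 2) (insert (n + 1) t)).sum id))).card
      = ((Finset.Icc 1 n).powerset.filter
        (fun t => t.card + 2 = k ∧ Odd (t.sum id))).card := by
    congr 1
    apply Finset.filter_congr
    intro t ht
    simp only [Finset.mem_powerset] at ht
    have hnt : (n + 1 : ℕ) ∉ t := fun h => h1 (ht h)
    have hnt2 : (n + 2 : ℕ) ∉ insert (n + 1) t := by
      intro h
      rcases Finset.mem_insert.1 h with h | h
      · omega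
      · have := ht h
        simp only [Finset.mem_Icc] at this
        omega
    rw [Finset.card_insert_of_notMem hnt2, Finset.card_insert_of_notMem hnt,
      Finset.sum_insert hnt2, Finset.sum_insert hnt]
    simp only [id]
    constructor
    · rintro ⟨hc, he⟩
      refine ⟨by omega, ?_⟩
      simp only [Nat.even_iff, Nat.odd_iff] at he ⊢
      omega
    · rintro ⟨hc, he⟩
      refine ⟨by omega, ?_⟩
      simp only [Nat.even_iff, Nat.odd_iff] at he ⊢
      omega
  rw [hB, hC, hD]
  by_cases hk0 : k = 0
  · subst hk0
    have eB : ((Finset.Icc 1 n).powerset.filter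
        (fun t => t.card + 1 = 0 ∧ Even (n + 1 + t.sum id))) = ∅ := by
      apply Finset.filter_false_of_mem; intro t _; simp
    have eC : ((Finset.Icc 1 n).powerset.filter
        (fun t => t.card + 1 = 0 ∧ Even (n + 2 + t.sum id))) = ∅ := by
      apply Finset.filter_false_of_mem; intro t _; simp
    have eD : ((Finset.Icc 1 n).powerset.filter
        (fun t => t.card + 2 = 0 ∧ Odd (t.sum id))) = ∅ := by
      apply Finset.filter_false_of_mem; intro t _; simp
    rw [eB, eC, eD]
    simp [evenCount]
  by_cases hk1 : k = 1
  · subst hk1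
    have eD : ((Finset.Icc 1 n).powerset.filter
        (fun t => t.card + 2 = 1 ∧ Odd (t.sum id))) = ∅ := by
      apply Finset.filter_false_of_mem; intro t _; simp
    have hBC := pair_count n 0
    have hB' : ((Finset.Icc 1 n).powerset.filter
        (fun t => t.card + 1 = 1 ∧ Even (n + 1 + t.sum id)))
        = ((Finset.Icc 1 n).powerset.filter
        (fun S => S.card = 0 ∧ Even (n + 1 + S.sum id))) := by
      apply Finset.filter_congr; intro t _; simp
    have hC' : ((Finset.Icc 1 n).powerset.filter
        (fun t => t.card + 1 = 1 ∧ Even (n + 2 + t.sum id)))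
        = ((Finset.Icc 1 n).powerset.filter
        (fun S => S.card = 0 ∧ Even (n + 2 + S.sum id))) := by
      apply Finset.filter_congr; intro t _; simp
    rw [eD, hB', hC']
    simp only [Finset.card_empty]
    rw [if_neg (by omega), if_neg (by omega)]
    have h1' : evenCount n 1 = ((Finset.Icc 1 n).powerset.filter
        (fun S => S.card = 1 ∧ Even (S.sum id))).card := rfl
    have hch : n.choose (1 - 1) = n.choose 0 := by norm_num
    omega
  · obtain ⟨m, rfl⟩ : ∃ m, k = m + 2 := ⟨k - 2, by omega⟩
    have hBC := pair_count n (m + 1)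
    have hB' : ((Finset.Icc 1 n).powerset.filter
        (fun t => t.card + 1 = m + 2 ∧ Even (n + 1 + t.sum id)))
        = ((Finset.Icc 1 n).powerset.filter
        (fun S => S.card = m + 1 ∧ Even (n + 1 + S.sum id))) := by
      apply Finset.filter_congr; intro t _
      constructor <;> rintro ⟨h, h'⟩ <;> exact ⟨by omega, h'⟩
    have hC' : ((Finset.Icc 1 n).powerset.filter
        (fun t => t.card + 1 = m + 2 ∧ Even (n + 2 + t.sum id)))
        = ((Finset.Icc 1 n).powerset.filter
        (fun S => S.card = m + 1 ∧ Even (n + 2 + S.sum id))) := by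
      apply Finset.filter_congr; intro t _
      constructor <;> rintro ⟨h, h'⟩ <;> exact ⟨by omega, h'⟩
    have hD' : ((Finset.Icc 1 n).powerset.filter
        (fun t => t.card + 2 = m + 2 ∧ Odd (t.sum id)))
        = ((Finset.Icc 1 n).powerset.filter
        (fun S => S.card = m ∧ Odd (S.sum id))) := by
      apply Finset.filter_congr; intro t _
      constructor <;> rintro ⟨h, h'⟩ <;> exact ⟨by omega, h'⟩
    rw [hB', hC', hD']
    rw [if_neg (by omega), if_pos (by omega)]
    have h1' : evenCount n (m + 2) = ((Finset.Icc 1 n).powerset.filter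
        (fun S => S.card = m + 2 ∧ Even (S.sum id))).card := rfl
    have h2' : oddCount n (m + 2 - 2) = ((Finset.Icc 1 n).powerset.filter
        (fun S => S.card = m ∧ Odd (S.sum id))).card := rfl
    have hch : n.choose (m + 2 - 1) = n.choose (m + 1) := by norm_num
    omega

lemma o_rec (n k : ℕ) :
    oddCount (n + 2) k = oddCount n k + (if k = 0 then 0 else n.choose (k - 1)) +
      (if 2 ≤ k then evenCount n (k - 2) else 0) := by
  have h1 : (n + 1 : ℕ) ∉ Finset.Icc 1 n := by simp
  have h2 : (n + 2 : ℕ) ∉ insert (n + 1) (Finset.Icc 1 n) := by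
    simp only [Finset.mem_insert, Finset.mem_Icc]
    omega
  have hicc : Finset.Icc 1 (n + 2) = insert (n + 2) (insert (n + 1) (Finset.Icc 1 n)) := by
    show Finset.Icc 1 (n + 1 + 1) = insert (n + 1 + 1) (insert (n + 1) (Finset.Icc 1 n))
    rw [← Finset.insert_Icc_right_eq_Icc_add_one (by omega : (1:ℕ) ≤ n + 1 + 1),
      ← Finset.insert_Icc_right_eq_Icc_add_one (by omega : (1:ℕ) ≤ n + 1)]
  rw [oddCount, hicc, count_insert h2, count_insert h1, count_insert h1]
  -- simplify term B
  have hB : ((Finset.Icc 1 n).powerset.filter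
        (fun t => (insert (n + 1) t).card = k ∧ Odd ((insert (n + 1) t).sum id))).card
      = ((Finset.Icc 1 n).powerset.filter
        (fun t => t.card + 1 = k ∧ Odd (n + 1 + t.sum id))).card := by
    congr 1
    apply Finset.filter_congr
    intro t ht
    simp only [Finset.mem_powerset] at ht
    have hnt : (n + 1 : ℕ) ∉ t := fun h => h1 (ht h)
    rw [Finset.card_insert_of_notMem hnt, Finset.sum_insert hnt]
    simp
  have hC : ((Finset.Icc 1 n).powerset.filter
        (fun t => (insert (n + 2) t).card = k ∧ Odd ((insert (n + 2) t).sum id))).card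
      = ((Finset.Icc 1 n).powerset.filter
        (fun t => t.card + 1 = k ∧ Odd (n + 2 + t.sum id))).card := by
    congr 1
    apply Finset.filter_congr
    intro t ht
    simp only [Finset.mem_powerset] at ht
    have hnt : (n + 2 : ℕ) ∉ t := by
      intro h
      have := ht h
      simp only [Finset.mem_Icc] at this
      omega
    rw [Finset.card_insert_of_notMem hnt, Finset.sum_insert hnt]
    simp
  have hD : ((Finset.Icc 1 n).powerset.filter
        (fun t => (insert (n + 2) (insert (n + 1) t)).card = k ∧
          Odd ((insert (n + 2) (insert (n + 1) t)).sum id))).card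
      = ((Finset.Icc 1 n).powerset.filter
        (fun t => t.card + 2 = k ∧ Even (t.sum id))).card := by
    congr 1
    apply Finset.filter_congr
    intro t ht
    simp only [Finset.mem_powerset] at ht
    have hnt : (n + 1 : ℕ) ∉ t := fun h => h1 (ht h)
    have hnt2 : (n + 2 : ℕ) ∉ insert (n + 1) t := by
      intro h
      rcases Finset.mem_insert.1 h with h | h
      · omega
      · have := ht h
        simp only [Finset.mem_Icc] at this
        omega
    rw [Finset.card_insert_of_notMem hnt2, Finset.card_insert_of_notMem hnt,
      Finset.sum_insert hnt2, Finset.sum_insert hnt]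
    simp only [id]
    constructor
    · rintro ⟨hc, he⟩
      refine ⟨by omega, ?_⟩
      simp only [Nat.even_iff, Nat.odd_iff] at he ⊢
      omega
    · rintro ⟨hc, he⟩
      refine ⟨by omega, ?_⟩
      simp only [Nat.even_iff, Nat.odd_iff] at he ⊢
      omega
  rw [hB, hC, hD]
  by_cases hk0 : k = 0
  · subst hk0
    have eB : ((Finset.Icc 1 n).powerset.filter
        (fun t => t.card + 1 = 0 ∧ Odd (n + 1 + t.sum id))) = ∅ := by
      apply Finset.filter_false_of_mem; intro t _; simp
    have eC : ((Finset.Icc 1 n).powerset.filter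
        (fun t => t.card + 1 = 0 ∧ Odd (n + 2 + t.sum id))) = ∅ := by
      apply Finset.filter_false_of_mem; intro t _; simp
    have eD : ((Finset.Icc 1 n).powerset.filter
        (fun t => t.card + 2 = 0 ∧ Even (t.sum id))) = ∅ := by
      apply Finset.filter_false_of_mem; intro t _; simp
    rw [eB, eC, eD]
    simp [oddCount]
  by_cases hk1 : k = 1
  · subst hk1
    have eD : ((Finset.Icc 1 n).powerset.filter
        (fun t => t.card + 2 = 1 ∧ Even (t.sum id))) = ∅ := by
      apply Finset.filter_false_of_mem; intro t _; simp
    have hBC := pair_count_odd n 0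
    have hB' : ((Finset.Icc 1 n).powerset.filter
        (fun t => t.card + 1 = 1 ∧ Odd (n + 1 + t.sum id)))
        = ((Finset.Icc 1 n).powerset.filter
        (fun S => S.card = 0 ∧ Odd (n + 1 + S.sum id))) := by
      apply Finset.filter_congr; intro t _; simp
    have hC' : ((Finset.Icc 1 n).powerset.filter
        (fun t => t.card + 1 = 1 ∧ Odd (n + 2 + t.sum id)))
        = ((Finset.Icc 1 n).powerset.filter
        (fun S => S.card = 0 ∧ Odd (n + 2 + S.sum id))) := by
      apply Finset.filter_congr; intro t _; simp
    rw [eD, hB', hC']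
    simp only [Finset.card_empty]
    rw [if_neg (by omega), if_neg (by omega)]
    have h1' : oddCount n 1 = ((Finset.Icc 1 n).powerset.filter
        (fun S => S.card = 1 ∧ Odd (S.sum id))).card := rfl
    have hch : n.choose (1 - 1) = n.choose 0 := by norm_num
    omega
  · obtain ⟨m, rfl⟩ : ∃ m, k = m + 2 := ⟨k - 2, by omega⟩
    have hBC := pair_count_odd n (m + 1)
    have hB' : ((Finset.Icc 1 n).powerset.filter
        (fun t => t.card + 1 = m + 2 ∧ Odd (n + 1 + t.sum id)))
        = ((Finset.Icc 1 n).powerset.filter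
        (fun S => S.card = m + 1 ∧ Odd (n + 1 + S.sum id))) := by
      apply Finset.filter_congr; intro t _
      constructor <;> rintro ⟨h, h'⟩ <;> exact ⟨by omega, h'⟩
    have hC' : ((Finset.Icc 1 n).powerset.filter
        (fun t => t.card + 1 = m + 2 ∧ Odd (n + 2 + t.sum id)))
        = ((Finset.Icc 1 n).powerset.filter
        (fun S => S.card = m + 1 ∧ Odd (n + 2 + S.sum id))) := by
      apply Finset.filter_congr; intro t _
      constructor <;> rintro ⟨h, h'⟩ <;> exact ⟨by omega, h'⟩
    have hD' : ((Finset.Icc 1 n).powerset.filter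
        (fun t => t.card + 2 = m + 2 ∧ Even (t.sum id)))
        = ((Finset.Icc 1 n).powerset.filter
        (fun S => S.card = m ∧ Even (S.sum id))) := by
      apply Finset.filter_congr; intro t _
      constructor <;> rintro ⟨h, h'⟩ <;> exact ⟨by omega, h'⟩
    rw [hB', hC', hD']
    rw [if_neg (by omega), if_pos (by omega)]
    have h1' : oddCount n (m + 2) = ((Finset.Icc 1 n).powerset.filter
        (fun S => S.card = m + 2 ∧ Odd (S.sum id))).card := rfl
    have h2' : evenCount n (m + 2 - 2) = ((Finset.Icc 1 n).powerset.filter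
        (fun S => S.card = m ∧ Even (S.sum id))).card := rfl
    have hch : n.choose (m + 2 - 1) = n.choose (m + 1) := by norm_num
    omega

theorem stmt_7 (n k : ℕ) :
    losanitsch n k =
      if k % 4 = 0 ∨ k % 4 = 3 then evenCount n k else oddCount n k := by
  induction n using Nat.strong_induction_on generalizing k with
  | _ n ih =>
  rcases n with _ | _ | n
  · have he : evenCount 0 k = if k = 0 then 1 else 0 := by
      rw [evenCount, Finset.Icc_eq_empty (by omega), Finset.powerset_empty,
        Finset.filter_singleton]
      by_cases hk : k = 0 <;> simp [hk] <;> omega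
    have ho : oddCount 0 k = 0 := by
      rw [oddCount, Finset.Icc_eq_empty (by omega), Finset.powerset_empty,
        Finset.filter_singleton]
      simp
    rw [losanitsch, he, ho]
    split_ifs <;> omega
  · have hicc : Finset.Icc 1 1 = {1} := Finset.Icc_self 1
    have hp : ({1} : Finset ℕ).powerset = {∅, {1}} := rfl
    have he : evenCount 1 k = if k = 0 then 1 else 0 := by
      rw [evenCount, hicc, hp]
      by_cases hk : k = 0 <;>
        simp [Finset.filter_insert, Finset.filter_singleton, hk, Nat.even_iff] <;> omega
    have ho : oddCount 1 k = if k = 1 then 1 else 0 := by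
      rw [oddCount, hicc, hp]
      by_cases hk : k = 1 <;>
        simp [Finset.filter_insert, Finset.filter_singleton, hk, Nat.odd_iff] <;> omega
    rw [losanitsch, he, ho]
    split_ifs <;> omega
  · show losanitsch (n + 2) k = _
    rw [losanitsch]
    have ihk := ih n (by omega) k
    have ihk2 := ih n (by omega) (k - 2)
    by_cases hc : k % 4 = 0 ∨ k % 4 = 3
    · rw [if_pos hc, e_rec]
      rw [if_pos hc] at ihk
      rw [ihk]
      by_cases h2k : 2 ≤ k
      · rw [if_neg (show ¬((k - 2) % 4 = 0 ∨ (k - 2) % 4 = 3) by omega)] at ihk2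
        rw [if_pos h2k, if_pos h2k, ihk2]
      · rw [if_neg h2k, if_neg h2k]
    · rw [if_neg hc, o_rec]
      rw [if_neg hc] at ihk
      rw [ihk]
      by_cases h2k : 2 ≤ k
      · rw [if_pos (show (k - 2) % 4 = 0 ∨ (k - 2) % 4 = 3 by omega)] at ihk2
        rw [if_pos h2k, if_pos h2k, ihk2]
      · rw [if_neg h2k, if_neg h2k]
end

section
/- The Losanitsch number L(n,k) equals the number of 0-1 words of length n with exactly k ones and an even number of inversions. -/
def inversions {n : ℕ} (w : Fin n → Bool) : ℕ :=
  (Finset.univ.filter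
    (fun p : Fin n × Fin n => p.1 < p.2 ∧ w p.1 = true ∧ w p.2 = false)).card

def words (n k : ℕ) : Finset (Fin n → Bool) :=
  Finset.univ.filter (fun w => (Finset.univ.filter (fun i => w i = true)).card = k)

/-- Number of ones in a word. -/
def ow {n : ℕ} (w : Fin n → Bool) : ℕ := (Finset.univ.filter (fun i => w i = true)).card

lemma ow_snoc {n : ℕ} (u : Fin n → Bool) (b : Bool) :
    ow (Fin.snoc u b) = ow u + if b then 1 else 0 := by
  unfold ow
  rw [Finset.card_filter, Finset.card_filter, Fin.sum_univ_castSucc]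
  simp [Fin.snoc_castSucc, Fin.snoc_last]

lemma inv_snoc {n : ℕ} (u : Fin n → Bool) (b : Bool) :
    inversions (Fin.snoc u b) = inversions u + if b then 0 else ow u := by
  unfold inversions ow
  rw [Finset.card_filter, Finset.card_filter, Finset.card_filter]
  rw [Fintype.sum_prod_type]
  simp only [Fin.sum_univ_castSucc]
  simp only [Fin.snoc_castSucc, Fin.snoc_last, Fin.castSucc_lt_castSucc_iff,
    Fin.castSucc_lt_last, lt_irrefl, false_and, if_false,
    (Fin.castSucc_lt_last _).not_gt]
  rw [Finset.sum_add_distrib, Fintype.sum_prod_type]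
  cases b <;> simp

lemma card_succ (n k : ℕ) (P : ℕ → Prop) [DecidablePred P] :
    ((words (n+1) k).filter (fun w => P (inversions w))).card =
      (if k = 0 then 0 else ((words n (k-1)).filter (fun w => P (inversions w))).card)
      + ((words n k).filter (fun w => P (inversions w + k))).card := by
  have hw : ∀ (m j : ℕ), words m j = Finset.univ.filter (fun w => ow w = j) := fun _ _ => rfl
  simp only [hw]
  rw [Finset.filter_filter, Finset.filter_filter, Finset.filter_filter]
  rw [Finset.card_filter]
  rw [← Equiv.sum_comp (Fin.snocEquiv (fun _ => Bool))]
  rw [Fintype.sum_prod_type]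
  rw [Fintype.univ_bool, Finset.sum_insert (by simp), Finset.sum_singleton]
  have he : ∀ (b : Bool) (u : Fin n → Bool), (Fin.snocEquiv fun _ => Bool) (b, u) = Fin.snoc u b :=
    fun _ _ => rfl
  simp only [he]
  simp only [ow_snoc, inv_snoc]
  norm_num
  congr 1
  · cases k with
    | zero => simp
    | succ j => simp
  · exact congrArg Finset.card (Finset.filter_congr (fun x _ =>
      and_congr_right (fun h => by rw [h])))

/-- Number of words with `k` ones and evenly many inversions. -/
def Ecard (n k : ℕ) : ℕ := ((words n k).filter (fun w => Even (inversions w))).card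

/-- Number of words with `k` ones and oddly many inversions. -/
def Ocard (n k : ℕ) : ℕ := ((words n k).filter (fun w => ¬ Even (inversions w))).card

lemma E_succ (n k : ℕ) :
    Ecard (n+1) k = (if k = 0 then 0 else Ecard n (k-1)) +
      (if Even k then Ecard n k else Ocard n k) := by
  unfold Ecard Ocard
  rw [card_succ]
  congr 1
  by_cases h : Even k
  · rw [if_pos h]
    exact congrArg _ (Finset.filter_congr fun w _ => by simp [Nat.even_add, h])
  · rw [if_neg h]
    exact congrArg _ (Finset.filter_congr fun w _ => by simp [Nat.even_add, h])

lemma O_succ (n k : ℕ) :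
    Ocard (n+1) k = (if k = 0 then 0 else Ocard n (k-1)) +
      (if Even k then Ocard n k else Ecard n k) := by
  unfold Ecard Ocard
  rw [card_succ n k (fun m => ¬ Even m)]
  congr 1
  by_cases h : Even k
  · rw [if_pos h]
    exact congrArg _ (Finset.filter_congr fun w _ => by simp [Nat.even_add, h])
  · rw [if_neg h]
    exact congrArg _ (Finset.filter_congr fun w _ => by simp [Nat.even_add, h])

lemma inversions_zero (w : Fin 0 → Bool) : inversions w = 0 := by
  simp [inversions]

lemma E_zero (k : ℕ) : Ecard 0 k = if k = 0 then 1 else 0 := by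
  unfold Ecard words
  cases k with
  | zero => simp [inversions_zero, Finset.filter_singleton]
  | succ j => simp

lemma O_zero (k : ℕ) : Ocard 0 k = 0 := by
  unfold Ocard words
  cases k with
  | zero => simp [inversions_zero, Finset.filter_singleton]
  | succ j => simp

lemma EO_sum (n : ℕ) : ∀ k, Ecard n k + Ocard n k = n.choose k := by
  induction n with
  | zero => intro k; cases k <;> simp [E_zero, O_zero]
  | succ n ih =>
    intro k
    rw [E_succ, O_succ]
    cases k with
    | zero => simpa using ih 0
    | succ j =>
      have h1 := ih j
      have h2 := ih (j+1)
      rw [Nat.choose_succ_succ]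
      by_cases h : Even (j+1) <;> simp [h] <;> omega

lemma E_two_step (n k : ℕ) :
    Ecard (n+2) k = Ecard n k + (if k = 0 then 0 else n.choose (k-1)) +
      (if 2 ≤ k then Ecard n (k-2) else 0) := by
  match k with
  | 0 => simp [E_succ]
  | 1 =>
    have h := EO_sum n 0
    rw [E_succ, E_succ, O_succ]
    have h0 : ¬ Even 1 := by decide
    have h1 : Even 0 := by decide
    simp only [h0, h1, if_true, if_false, if_neg (by omega : ¬ (1:ℕ) = 0),
      if_pos (rfl : (0:ℕ) = 0), if_neg (by omega : ¬ 2 ≤ 1)]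
    norm_num at h ⊢
    omega
  | (j+2) =>
    have h := EO_sum n (j+1)
    rw [E_succ, E_succ, O_succ, E_succ]
    have e1 : j + 2 - 1 = j + 1 := by omega
    have e2 : j + 1 - 1 = j := by omega
    have e3 : j + 2 - 2 = j := by omega
    simp only [e1, e2, e3, if_neg (by omega : ¬ j + 2 = 0), if_neg (by omega : ¬ j + 1 = 0),
      if_pos (by omega : 2 ≤ j + 2)]
    by_cases hj : Even j
    · have hj1 : ¬ Even (j+1) := by simp [Nat.even_add_one, hj]
      have hj2 : Even (j+2) := by simp [Nat.even_add_one, hj1]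
      simp only [hj, hj1, hj2, if_true, if_false, if_pos, if_neg]
      omega
    · have hj1 : Even (j+1) := by simp [Nat.even_add_one, hj]
      have hj2 : ¬ Even (j+2) := by simp [Nat.even_add_one, hj1]
      simp only [hj, hj1, hj2, if_true, if_false, if_pos, if_neg]
      omega

lemma E_one (k : ℕ) : Ecard 1 k = if k ≤ 1 then 1 else 0 := by
  rw [E_succ]
  match k with
  | 0 => simp [E_zero]
  | 1 => simp [E_zero, O_zero]
  | (j+2) =>
    by_cases h : Even (j+2) <;>
      simp [h, E_zero, O_zero, if_neg (by omega : ¬ j + 2 ≤ 1)]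

theorem stmt_8 (n k : ℕ) :
    losanitsch n k = ((words n k).filter (fun w => Even (inversions w))).card := by
  have : ∀ m j, losanitsch m j = Ecard m j := by
    intro m
    induction m using Nat.twoStepInduction with
    | zero => intro j; rw [losanitsch, E_zero]
    | one => intro j; rw [losanitsch, E_one]
    | more m ih _ =>
      intro j
      rw [losanitsch, E_two_step, ih]
      by_cases h : 2 ≤ j
      · rw [if_pos h, if_pos h, ih]
      · rw [if_neg h, if_neg h]
  exact this n k
end

section
/- For all n ≥ 0, the Losanitsch polynomials satisfy L_{2n}(x) = ((1+x)^{2n} + (1+x^2)^n)/2 and L_{2n+1}(x) = ((1+x)^{2n+1} + (1+x)(1+x^2)^n)/2. In particular L_{2n+1}(x) = (1+x)L_{2n}(x). -/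
noncomputable def LPoly (n : ℕ) : Polynomial ℚ :=
  ∑ k ∈ Finset.range (n + 1), (losanitsch n k : ℚ) • Polynomial.X ^ k

open Polynomial Finset

lemma los_zero : ∀ n k, n < k → losanitsch n k = 0
  | 0, k, h => by simp [losanitsch]; omega
  | 1, k, h => by simp [losanitsch]; omega
  | n+2, k, h => by
      rw [losanitsch, los_zero n k (by omega), Nat.choose_eq_zero_of_lt (by omega)]
      have h2 : 2 ≤ k := by omega
      simp [h2, los_zero n (k-2) (by omega)]

lemma LPoly_ext (n N : ℕ) (h : n ≤ N) :
    LPoly n = ∑ k ∈ range (N+1), (losanitsch n k : ℚ) • X^k := by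
  rw [LPoly]
  apply Finset.sum_subset (Finset.range_subset_range.mpr (by omega))
  intro k _ hk
  simp only [Finset.mem_range, not_lt] at hk
  rw [los_zero n k (by omega)]
  simp

lemma one_add_X_pow (n : ℕ) :
    ((1:ℚ[X]) + X)^n = ∑ k ∈ range (n+1), (n.choose k : ℚ) • X^k := by
  rw [add_comm, add_pow]
  refine Finset.sum_congr rfl fun k _ => ?_
  rw [one_pow, mul_one, smul_eq_C_mul, C_eq_natCast, mul_comm]

lemma LPoly_rec (n : ℕ) : LPoly (n+2) = (1 + X^2) * LPoly n + X * (1+X)^n := by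
  have key : LPoly (n+2) = ∑ k ∈ range (n+3), (losanitsch (n+2) k : ℚ) • X^k := rfl
  rw [key]
  have expand : ∀ k, ((losanitsch (n+2) k : ℚ)) • (X:ℚ[X])^k =
      (losanitsch n k : ℚ) • X^k +
      (if k = 0 then (0:ℚ) else (n.choose (k-1) : ℚ)) • X^k +
      (if 2 ≤ k then (losanitsch n (k-2) : ℚ) else 0) • X^k := by
    intro k
    rw [show losanitsch (n+2) k = losanitsch n k + (if k = 0 then 0 else n.choose (k - 1)) +
        (if 2 ≤ k then losanitsch n (k - 2) else 0) from rfl]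
    push_cast
    rw [add_smul, add_smul]
  simp only [expand]
  rw [Finset.sum_add_distrib, Finset.sum_add_distrib]
  have hA : ∑ k ∈ range (n+3), (losanitsch n k : ℚ) • (X:ℚ[X])^k = LPoly n :=
    (LPoly_ext n (n+2) (by omega)).symm
  have hB : ∑ k ∈ range (n+3), (if k = 0 then (0:ℚ) else (n.choose (k-1) : ℚ)) • (X:ℚ[X])^k
      = X * (1+X)^n := by
    rw [Finset.sum_range_succ']
    simp only [eq_self_iff_true, if_true, zero_smul, add_zero, Nat.add_sub_cancel, if_neg (Nat.succ_ne_zero _)]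
    rw [Finset.sum_range_succ]
    rw [Nat.choose_succ_self, Nat.cast_zero, zero_smul, add_zero]
    rw [one_add_X_pow]
    rw [Finset.mul_sum]
    refine Finset.sum_congr rfl fun k _ => ?_
    rw [smul_eq_C_mul, smul_eq_C_mul, pow_succ]
    ring
  have hC : ∑ k ∈ range (n+3), (if 2 ≤ k then (losanitsch n (k-2) : ℚ) else 0) • (X:ℚ[X])^k
      = X^2 * LPoly n := by
    rw [Finset.sum_range_succ']
    simp only [if_neg (show ¬(2 ≤ 0) by omega), zero_smul, add_zero]
    rw [Finset.sum_range_succ']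
    simp only [if_neg (show ¬(2 ≤ 0+1) by omega), zero_smul, add_zero]
    rw [LPoly]
    rw [Finset.mul_sum]
    refine Finset.sum_congr rfl fun k _ => ?_
    rw [if_pos (show 2 ≤ k+1+1 by omega), show k+1+1-2 = k from by omega,
      smul_eq_C_mul, smul_eq_C_mul, show k+1+1 = k+2 from rfl, pow_add]
    ring
  rw [hA, hB, hC]
  ring

lemma two_LPoly : ∀ n : ℕ,
    2 * LPoly (2*n) = (1 + X)^(2*n) + (1 + X^2)^n ∧
    2 * LPoly (2*n+1) = (1 + X)^(2*n+1) + (1 + X) * (1 + X^2)^n := by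
  intro n
  induction n with
  | zero =>
    have h0 : LPoly 0 = 1 := by simp [LPoly, losanitsch]
    have h1 : LPoly 1 = 1 + X := by
      rw [LPoly]
      simp [Finset.sum_range_succ, losanitsch]
    norm_num [h0, h1]; ring
  | succ m ih =>
    obtain ⟨he, ho⟩ := ih
    have r1 : LPoly (2*(m+1)) = (1 + X^2) * LPoly (2*m) + X * (1+X)^(2*m) := by
      rw [show 2*(m+1) = 2*m+2 by ring]; exact LPoly_rec (2*m)
    have r2 : LPoly (2*(m+1)+1) = (1 + X^2) * LPoly (2*m+1) + X * (1+X)^(2*m+1) := by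
      rw [show 2*(m+1)+1 = (2*m+1)+2 by ring]; exact LPoly_rec (2*m+1)
    constructor
    · rw [r1, show 2*(m+1) = 2*m+2 by ring, pow_add, pow_succ (1+X^2:ℚ[X])]
      linear_combination (1 + X^2 : ℚ[X]) * he
    · rw [r2, show 2*(m+1)+1 = (2*m+1)+2 by ring, pow_add, pow_succ (1+X^2:ℚ[X])]
      linear_combination (1 + X^2 : ℚ[X]) * ho

open Polynomial in
theorem stmt_9 (n : ℕ) :
    LPoly (2 * n) = C (1 / 2 : ℚ) * ((1 + X) ^ (2 * n) + (1 + X ^ 2) ^ n) ∧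
    LPoly (2 * n + 1) =
      C (1 / 2 : ℚ) * ((1 + X) ^ (2 * n + 1) + (1 + X) * (1 + X ^ 2) ^ n) ∧
    LPoly (2 * n + 1) = (1 + X) * LPoly (2 * n) := by
  obtain ⟨he, ho⟩ := two_LPoly n
  have half : (C (1/2 : ℚ) : ℚ[X]) * 2 = 1 := by
    rw [show (2:ℚ[X]) = C 2 by norm_cast, ← C_mul, ← C_1]
    norm_num
  have conv : ∀ p r : ℚ[X], 2 * p = r → p = C (1/2 : ℚ) * r := by
    intro p r h
    rw [← h, ← mul_assoc, half, one_mul]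
  refine ⟨conv _ _ he, conv _ _ ho, ?_⟩
  rw [conv _ _ he, conv _ _ ho]
  ring
end

section
/- L(2n, 2k+1) = C(2n, 2k+1)/2, and in all other cases (i.e., when n is odd or k is even) L(n,k) = (C(n,k) + C(⌊n/2⌋, ⌊k/2⌋))/2. -/
lemma losanitsch_closed (n : ℕ) : ∀ k, 2 * losanitsch n k
    = n.choose k + (if Even n ∧ Odd k then 0 else (n / 2).choose (k / 2)) := by
  induction n using Nat.twoStepInduction with
  | zero =>
    intro k
    rcases k with _ | k
    · simp [losanitsch]
    · by_cases h : Odd (k + 1)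
      · simp [losanitsch, h, Nat.choose_eq_zero_of_lt (by omega : 0 < k + 1)]
      · have hk : 1 ≤ (k + 1) / 2 := by
          rw [Nat.not_odd_iff_even] at h
          obtain ⟨m, hm⟩ := h
          omega
        simp [losanitsch, h, Nat.choose_eq_zero_of_lt (by omega : 0 < k + 1),
          Nat.choose_eq_zero_of_lt (by omega : 0 < (k + 1) / 2)]
  | one =>
    intro k
    have : ¬ Even 1 := by decide
    rcases k with _ | _ | k
    · simp [losanitsch]
    · simp [losanitsch, this]
    · have hk : 1 ≤ (k + 2) / 2 := by omega
      simp [losanitsch, this, Nat.choose_eq_zero_of_lt (by omega : 1 < k + 2),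
        Nat.choose_eq_zero_of_lt (by omega : 0 < (k + 2) / 2)]
  | more n ih _ =>
    intro k
    have hen : Even (n + 2) ↔ Even n := by simp [Nat.even_add]
    rcases k with _ | _ | k
    · have := ih 0
      simp [losanitsch] at this ⊢
      omega
    · have := ih 1
      have hd : (n + 2) / 2 = n / 2 + 1 := by omega
      by_cases hn : Even n
      · simp [losanitsch, hn, hen, Nat.choose_one_right] at this ⊢
        omega
      · simp [losanitsch, hn, hen, hd, Nat.choose_one_right] at this ⊢
        omega
    · have h1 := ih (k + 2)
      have h0 := ih k
      have hok : Odd (k + 2) ↔ Odd k := by simp [Nat.odd_add]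
      have hdn : (n + 2) / 2 = n / 2 + 1 := by omega
      have hdk : (k + 2) / 2 = k / 2 + 1 := by omega
      have p1 : (n + 2).choose (k + 2)
          = n.choose k + 2 * n.choose (k + 1) + n.choose (k + 2) := by
        rw [show n + 2 = (n + 1) + 1 from rfl, show k + 2 = (k + 1) + 1 from rfl,
          Nat.choose_succ_succ, Nat.choose_succ_succ, Nat.choose_succ_succ]
        ring
      by_cases h : Even n ∧ Odd k
      · simp [losanitsch, h, hen, hok, h.1, h.2] at h1 h0 ⊢
        simp only [show k + 1 + 1 = k + 2 from rfl] at *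
        omega
      · have p2 : (n / 2 + 1).choose (k / 2 + 1)
            = (n / 2).choose (k / 2) + (n / 2).choose (k / 2 + 1) :=
          Nat.choose_succ_succ _ _
        simp [losanitsch, h, hen, hok, hdn, hdk, p2, p1] at h1 h0 ⊢
        simp only [show k + 1 + 1 = k + 2 from rfl] at *
        omega

theorem stmt_11 :
    (∀ n k : ℕ, 2 * losanitsch (2 * n) (2 * k + 1) = (2 * n).choose (2 * k + 1)) ∧
    (∀ n k : ℕ, Odd n ∨ Even k →
      2 * losanitsch n k = n.choose k + (n / 2).choose (k / 2)) := by
  constructor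
  · intro n k
    have := losanitsch_closed (2 * n) (2 * k + 1)
    simp [even_two_mul, Nat.odd_iff, Nat.add_mul_mod_self_left] at this
    simpa using this
  · intro n k h
    have := losanitsch_closed n k
    have hcond : ¬ (Even n ∧ Odd k) := by
      rcases h with h | h
      · exact fun hc => (Nat.not_even_iff_odd.2 h) hc.1
      · exact fun hc => (Nat.not_odd_iff_even.2 h) hc.2
    simpa [hcond] using this
end

section
/- The number of equivalence classes of 0-1 words of length n with k ones, under the equivalence identifying a word with its reversal, equals the Losanitsch number L(n,k). -/
lemma card_words (n k : ℕ) : (words n k).card = n.choose k := by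
  have h : (Finset.powersetCard k (Finset.univ : Finset (Fin n))).card = n.choose k := by
    simp [Finset.card_powersetCard]
  rw [← h]
  refine Finset.card_bij' (fun w _ => Finset.univ.filter (fun i => w i = true))
    (fun S _ => fun i => decide (i ∈ S)) ?_ ?_ ?_ ?_
  · intro w hw
    simp only [words, Finset.mem_filter] at hw
    simp [Finset.mem_powersetCard, hw.2]
  · intro S hS
    simp only [Finset.mem_powersetCard] at hS
    simp only [words, Finset.mem_filter, Finset.mem_univ, true_and]
    rw [← hS.2]
    congr 1
    ext i
    simp
  · intro w hw; funext i; simp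
  · intro S hS; ext i; simp

def pal : ℕ → ℕ → ℕ
  | 0, k => if k = 0 then 1 else 0
  | 1, k => if k ≤ 1 then 1 else 0
  | n + 2, k => pal n k + (if 2 ≤ k then pal n (k - 2) else 0)

def palset (n k : ℕ) : Finset (Fin n → Bool) :=
  (words n k).filter (fun w => ∀ i, w (Fin.rev i) = w i)

def body {n : ℕ} (w : Fin (n + 2) → Bool) : Fin n → Bool := fun i => w i.castSucc.succ

def glue {n : ℕ} (b : Bool) (v : Fin n → Bool) : Fin (n + 2) → Bool :=
  Fin.cons b (Fin.snoc v b)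

lemma rev_mid {n : ℕ} (i : Fin n) :
    Fin.rev ((i.castSucc.succ : Fin (n + 2))) = (Fin.rev i).castSucc.succ := by
  ext
  simp [Fin.val_rev]
  omega

lemma count_decomp {n : ℕ} (w : Fin (n + 2) → Bool) :
    (Finset.univ.filter (fun i => w i = true)).card =
      (if w 0 = true then 1 else 0) +
        (Finset.univ.filter (fun i => body w i = true)).card +
        (if w (Fin.last (n + 1)) = true then 1 else 0) := by
  simp only [Finset.card_filter]
  rw [Fin.sum_univ_succ, Fin.sum_univ_castSucc]
  simp only [body, Fin.succ_last, Nat.succ_eq_add_one]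
  exact (add_assoc _ _ _).symm

lemma glue_mid {n : ℕ} (b : Bool) (v : Fin n → Bool) (i : Fin n) :
    glue b v (i.castSucc.succ) = v i := by
  unfold glue
  rw [Fin.cons_succ, Fin.snoc_castSucc]

lemma body_glue {n : ℕ} (b : Bool) (v : Fin n → Bool) : body (glue b v) = v := by
  funext i
  exact glue_mid b v i

lemma glue_zero {n : ℕ} (b : Bool) (v : Fin n → Bool) : glue b v 0 = b := rfl

lemma glue_last {n : ℕ} (b : Bool) (v : Fin n → Bool) : glue b v (Fin.last (n + 1)) = b := by
  have e : Fin.last (n + 1) = (Fin.last n).succ := (Fin.succ_last n).symm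
  rw [e]
  unfold glue
  rw [Fin.cons_succ, Fin.snoc_last]

lemma glue_pal {n : ℕ} (b : Bool) (v : Fin n → Bool) (hv : ∀ i, v (Fin.rev i) = v i) :
    ∀ j, glue b v (Fin.rev j) = glue b v j := by
  intro j
  induction j using Fin.cases with
  | zero => rw [Fin.rev_zero, glue_last, glue_zero]
  | succ i =>
    induction i using Fin.lastCases with
    | last =>
      rw [Fin.succ_last, Fin.rev_last, glue_zero, glue_last]
    | cast i' =>
      rw [rev_mid]
      rw [glue_mid, glue_mid, hv]

lemma card_palset_filter (n k : ℕ) (b : Bool) (k' : ℕ)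
    (hk : k = k' + (if b then 2 else 0)) :
    ((palset (n + 2) k).filter (fun w => w 0 = b)).card = (palset n k').card := by
  refine Finset.card_bij' (fun w _ => body w) (fun v _ => glue b v) ?_ ?_ ?_ ?_
  · intro w hw
    simp only [palset, words, Finset.mem_filter, Finset.mem_univ, true_and] at hw ⊢
    obtain ⟨⟨hcnt, hpal⟩, hb⟩ := hw
    constructor
    · have hlast : w (Fin.last (n + 1)) = b := by rw [← Fin.rev_zero, hpal, hb]
      rw [count_decomp] at hcnt
      rw [hb, hlast] at hcnt
      subst hk
      cases b <;> simp at hcnt ⊢ <;> omega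
    · intro i
      have h := hpal (i.castSucc.succ)
      rw [rev_mid] at h
      exact h
  · intro v hv
    simp only [palset, words, Finset.mem_filter, Finset.mem_univ, true_and] at hv ⊢
    obtain ⟨hcnt, hpal⟩ := hv
    refine ⟨⟨?_, glue_pal b v hpal⟩, glue_zero b v⟩
    rw [count_decomp, body_glue, glue_zero, glue_last, hcnt]
    subst hk
    cases b <;> simp <;> try omega
  · intro w hw
    simp only [Finset.mem_filter] at hw
    obtain ⟨hw1, hb⟩ := hw
    simp only [palset, words, Finset.mem_filter] at hw1
    have hpal := hw1.2
    have hlast : w (Fin.last (n + 1)) = b := by rw [← Fin.rev_zero, hpal, hb]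
    funext j
    show glue b (body w) j = w j
    induction j using Fin.cases with
    | zero => rw [glue_zero, hb]
    | succ i =>
      induction i using Fin.lastCases with
      | last => rw [Fin.succ_last, glue_last, hlast]
      | cast i' => rw [glue_mid]; rfl
  · intro v _; exact body_glue b v

lemma palset_small (n : ℕ) (hn : n ≤ 1) (k : ℕ) : palset n k = words n k := by
  rw [palset, Finset.filter_true_of_mem]
  intro w _ i
  interval_cases n
  · exact i.elim0
  · congr 1
    exact Subsingleton.elim _ _

lemma card_palset (n k : ℕ) : (palset n k).card = pal n k := by
  induction n using Nat.strong_induction_on generalizing k with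
  | _ n ih =>
    obtain _ | _ | m := n
    · rw [palset_small 0 (by norm_num), card_words]
      cases k <;> simp [pal]
    · rw [palset_small 1 (by norm_num), card_words]
      match k with
      | 0 => simp [pal]
      | 1 => simp [pal]
      | j + 2 => simp [pal, Nat.choose_eq_zero_of_lt (by omega : (1:ℕ) < j + 2)]
    · have hm : m < m + 2 := by omega
      have hfalse : ((palset (m + 2) k).filter (fun w => w 0 = false)).card = pal m k := by
        rw [card_palset_filter m k false k (by simp), ih m hm]
      have htrue : ((palset (m + 2) k).filter (fun w => w 0 = true)).card =
          (if 2 ≤ k then pal m (k - 2) else 0) := by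
        by_cases h2 : 2 ≤ k
        · rw [if_pos h2, card_palset_filter m k true (k - 2)
            (by simp [Nat.sub_add_cancel h2]), ih m hm]
        · rw [if_neg h2, Finset.card_eq_zero]
          ext w
          simp only [Finset.mem_filter, Finset.notMem_empty, iff_false]
          rintro ⟨hw1, hb⟩
          simp only [palset, words, Finset.mem_filter, Finset.mem_univ, true_and] at hw1
          have hlast : w (Fin.last (m + 1)) = true := by rw [← Fin.rev_zero, hw1.2, hb]
          have := hw1.1
          rw [count_decomp, hb, hlast] at this
          simp at this
          clear hfalse
          omega
      have hsplit := Finset.card_filter_add_card_filter_not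
        (s := palset (m + 2) k) (p := fun w => w 0 = false)
      have hneg : (palset (m + 2) k).filter (fun w => ¬ w 0 = false) =
          (palset (m + 2) k).filter (fun w => w 0 = true) := by
        ext w
        simp
      rw [hneg] at hsplit
      rw [pal, ← hsplit, hfalse, htrue]


lemma two_mul_los (n k : ℕ) : 2 * losanitsch n k = n.choose k + pal n k := by
  induction n using Nat.strong_induction_on generalizing k with
  | _ n ih =>
    obtain _ | _ | m := n
    · cases k <;> simp [losanitsch, pal]
    · match k with
      | 0 => simp [losanitsch, pal]
      | 1 => simp [losanitsch, pal]
      | j + 2 => simp [losanitsch, pal, Nat.choose_eq_zero_of_lt (by omega : (1:ℕ) < j + 2)]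
    · have hm : m < m + 2 := by omega
      match k with
      | 0 =>
        have h := ih m hm 0
        simp only [losanitsch, pal] at h ⊢
        simp at h ⊢
        omega
      | 1 =>
        have h := ih m hm 1
        simp only [losanitsch, pal] at h ⊢
        simp [Nat.choose_one_right] at h ⊢
        omega
      | j + 2 =>
        have h1 := ih m hm (j + 2)
        have h2 := ih m hm j
        have hp : (m + 2).choose (j + 2) =
            m.choose j + 2 * m.choose (j + 1) + m.choose (j + 2) := by
          rw [Nat.choose_succ_succ (m + 1) (j + 1), Nat.choose_succ_succ m j,
            Nat.choose_succ_succ m (j + 1)]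
          ring
        simp only [losanitsch, pal]
        simp only [Nat.add_sub_cancel, if_neg (by omega : ¬ (j + 2 = 0)),
          if_pos (by omega : 2 ≤ j + 2)]
        have : j + 2 - 1 = j + 1 := by omega
        rw [this, hp]
        omega

theorem stmt_12 (n k : ℕ) :
    ((words n k).image
      (fun w => ({w, fun i => w (Fin.rev i)} : Finset (Fin n → Bool)))).card =
    losanitsch n k := by
  set f : (Fin n → Bool) → Finset (Fin n → Bool) :=
    fun w => ({w, fun i => w (Fin.rev i)} : Finset (Fin n → Bool)) with hf
  have hrevmem : ∀ w ∈ words n k, (fun i => w (Fin.rev i)) ∈ words n k := by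
    intro w hw
    simp only [words, Finset.mem_filter, Finset.mem_univ, true_and] at hw ⊢
    rw [← hw]
    refine Finset.card_bij' (fun i _ => Fin.rev i) (fun i _ => Fin.rev i) ?_ ?_ ?_ ?_
    · intro i hi
      simp only [Finset.mem_filter, Finset.mem_univ, true_and] at hi ⊢
      exact hi
    · intro i hi
      simp only [Finset.mem_filter, Finset.mem_univ, true_and] at hi ⊢
      rw [Fin.rev_rev]
      exact hi
    · intro i _; exact Fin.rev_rev i
    · intro i _; exact Fin.rev_rev i
  have key : ∀ w : Fin n → Bool, f (fun i => w (Fin.rev i)) = f w := by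
    intro w
    simp only [hf]
    rw [Finset.pair_comm]
    congr 1
    funext i
    rw [Fin.rev_rev]
  have hfib : ∀ s ∈ (words n k).image f, (words n k).filter (fun w => f w = s) = s := by
    intro s hs
    obtain ⟨w, hw, rfl⟩ := Finset.mem_image.mp hs
    ext v
    simp only [Finset.mem_filter]
    constructor
    · rintro ⟨_, he⟩
      rw [← he]
      exact Finset.mem_insert_self _ _
    · intro hv
      rcases Finset.mem_insert.mp hv with h | h
      · subst h; exact ⟨hw, rfl⟩
      · have h' : v = fun i => w (Fin.rev i) := by simpa using h
        subst h'
        exact ⟨hrevmem w hw, key w⟩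
  have hcard : (words n k).card = ∑ s ∈ (words n k).image f, s.card := by
    rw [Finset.card_eq_sum_card_image f]
    apply Finset.sum_congr rfl
    intro s hs
    rw [hfib s hs]
  have hsc : ∀ s ∈ (words n k).image f, s.card + (if s.card = 1 then 1 else 0) = 2 := by
    intro s hs
    obtain ⟨w, hw, rfl⟩ := Finset.mem_image.mp hs
    by_cases h : (fun i => w (Fin.rev i)) = w
    · simp only [hf, h]
      simp
    · have hc : (f w).card = 2 := Finset.card_pair (fun e => h e.symm)
      rw [hc]
      simp
  have hpalbij : (((words n k).image f).filter (fun s => s.card = 1)).card =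
      (palset n k).card := by
    symm
    refine Finset.card_bij (fun w _ => f w) ?_ ?_ ?_
    · intro w hw
      simp only [palset, Finset.mem_filter] at hw
      have hrev : (fun i => w (Fin.rev i)) = w := funext hw.2
      simp only [Finset.mem_filter]
      refine ⟨Finset.mem_image_of_mem f hw.1, ?_⟩
      simp only [hf, hrev]
      simp
    · intro w1 h1 w2 h2 he
      simp only [palset, Finset.mem_filter] at h2
      have hrev2 : (fun i => w2 (Fin.rev i)) = w2 := funext h2.2
      have he' : f w1 = f w2 := he
      have : w1 ∈ f w2 := by
        rw [← he']
        exact Finset.mem_insert_self _ _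
      simp only [hf, hrev2] at this
      simpa using this
    · intro s hs
      simp only [Finset.mem_filter] at hs
      obtain ⟨hs1, hs2⟩ := hs
      obtain ⟨w, hw, rfl⟩ := Finset.mem_image.mp hs1
      obtain ⟨a, ha⟩ := Finset.card_eq_one.mp hs2
      have hwa : w = a := by
        have : w ∈ f w := Finset.mem_insert_self _ _
        rw [ha] at this
        simpa using this
      have hra : (fun i => w (Fin.rev i)) = a := by
        have : (fun i => w (Fin.rev i)) ∈ f w := by
          simp [hf]
        rw [ha] at this
        simpa using this
      refine ⟨w, ?_, rfl⟩
      simp only [palset, Finset.mem_filter]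
      refine ⟨hw, ?_⟩
      intro i
      have := congrFun (hra.trans hwa.symm) i
      simpa using this
  have h2 : 2 * ((words n k).image f).card = (words n k).card + (palset n k).card := by
    rw [hcard, ← hpalbij]
    rw [Finset.card_filter]
    rw [← Finset.sum_add_distrib]
    rw [Finset.sum_congr rfl hsc]
    rw [Finset.sum_const, smul_eq_mul, mul_comm]
  have := two_mul_los n k
  rw [← card_words n k, ← card_palset n k] at this
  omega
end

section
/- For all n and k, q^{C(k+1,2)} · [n choose k]_q ≡ e(n,k) + o(n,k)·q (mod q^2 − 1) in ℤ[q]. -/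
noncomputable def gaussBinom (n k : ℕ) : Polynomial ℤ :=
  ∑ w ∈ words n k, Polynomial.X ^ inversions w

open Finset

lemma pairs_card {α : Type*} [LinearOrder α] [DecidableEq α] (T : Finset α) :
    ((T ×ˢ T).filter (fun p => p.1 < p.2)).card = T.card.choose 2 := by
  have hswap : ((T ×ˢ T).filter (fun p => p.1 < p.2)).card
      = ((T ×ˢ T).filter (fun p => p.2 < p.1)).card := by
    apply Finset.card_bij (fun p _ => Prod.swap p)
    · intro p hp; simp only [mem_filter, mem_product] at *; tauto
    · intro p _ q _ h; exact Prod.swap_injective h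
    · intro p hp; exact ⟨p.swap, by simp only [mem_filter, mem_product] at *; tauto, by simp⟩
  have hunion : ((T ×ˢ T).filter (fun p => p.1 < p.2)).card
      + ((T ×ˢ T).filter (fun p => p.2 < p.1)).card = T.offDiag.card := by
    rw [← Finset.card_union_of_disjoint]
    · congr 1
      ext p
      simp only [mem_union, mem_filter, mem_product, mem_offDiag]
      constructor
      · rintro (⟨⟨h1,h2⟩,h⟩|⟨⟨h1,h2⟩,h⟩)
        · exact ⟨h1, h2, ne_of_lt h⟩
        · exact ⟨h1, h2, ne_of_gt h⟩
      · rintro ⟨h1, h2, h⟩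
        rcases lt_or_gt_of_ne h with h | h
        · exact Or.inl ⟨⟨h1,h2⟩,h⟩
        · exact Or.inr ⟨⟨h1,h2⟩,h⟩
    · rw [Finset.disjoint_filter]
      intro p _ h1 h2; exact absurd (h1.trans h2) (lt_irrefl _)
  rw [offDiag_card] at hunion
  rw [Nat.choose_two_right]
  have hmul : T.card * T.card - T.card = T.card * (T.card - 1) := by
    rw [Nat.mul_sub, Nat.mul_one]
  omega

lemma inv_key {n k : ℕ} (w : Fin n → Bool)
    (hk : (Finset.univ.filter (fun i => w i = true)).card = k) :
    inversions w + (k + 1).choose 2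
      = ∑ i ∈ Finset.univ.filter (fun i => w i = true), (n - i.val) := by
  classical
  set T := Finset.univ.filter (fun i => w i = true) with hT
  have hTn : ∀ i ∈ T, i.val < n := fun i _ => i.isLt
  have h1 : ∑ i ∈ T, (n - i.val) = (∑ i ∈ T, (n - 1 - i.val)) + k := by
    rw [← hk, Finset.card_eq_sum_ones, ← Finset.sum_add_distrib]
    apply Finset.sum_congr rfl
    intro i hi
    have := i.isLt
    omega
  have h2 : ∑ i ∈ T, (n - 1 - i.val)
      = ((T ×ˢ (Finset.univ : Finset (Fin n))).filter (fun p => p.1 < p.2)).card := by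
    rw [Finset.card_filter, Finset.sum_product]
    apply Finset.sum_congr rfl
    intro i _
    rw [← Finset.card_filter]
    have : Finset.univ.filter (fun j => i < j) = Finset.Ioi i := by
      ext j; simp
    rw [this, Fin.card_Ioi]
  have hsplit : ((T ×ˢ (Finset.univ : Finset (Fin n))).filter (fun p => p.1 < p.2)).card
      = inversions w + ((T ×ˢ T).filter (fun p => p.1 < p.2)).card := by
    rw [← Finset.card_filter_add_card_filter_not
      (s := (T ×ˢ (Finset.univ : Finset (Fin n))).filter (fun p => p.1 < p.2))
      (p := fun p => w p.2 = false)]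
    congr 1
    · rw [Finset.filter_filter]
      unfold inversions
      congr 1
      ext p
      simp only [Finset.mem_filter, Finset.mem_product, Finset.mem_univ, hT, true_and,
        and_true]
      tauto
    · rw [Finset.filter_filter]
      congr 1
      ext p
      simp only [Finset.mem_filter, Finset.mem_product, Finset.mem_univ, hT, true_and,
        and_true, Bool.not_eq_false]
      tauto
  have hpairs := pairs_card T
  have hchoose : (k + 1).choose 2 = k + k.choose 2 := by
    rw [Nat.choose_succ_succ]
    simp [Nat.choose_one_right]
  rw [h1, h2, hsplit, hpairs, hk, hchoose]
  ring

def F {n : ℕ} (w : Fin n → Bool) : Finset ℕ :=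
  (Finset.univ.filter (fun i => w i = true)).image (fun i : Fin n => n - i.val)

lemma F_inj {n : ℕ} : Set.InjOn (fun i : Fin n => n - i.val) (Finset.univ : Finset (Fin n)) := by
  intro i _ j _ h
  have hi := i.isLt
  have hj := j.isLt
  have h' : n - i.val = n - j.val := h
  exact Fin.ext (by omega)

lemma F_card {n : ℕ} (w : Fin n → Bool) :
    (F w).card = (Finset.univ.filter (fun i => w i = true)).card :=
  Finset.card_image_of_injOn (F_inj.mono (by intro x hx; simp))

lemma F_sum {n : ℕ} (w : Fin n → Bool) :
    (F w).sum id = ∑ i ∈ Finset.univ.filter (fun i => w i = true), (n - i.val) :=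
  Finset.sum_image (fun i hi j hj h => F_inj (by simp) (by simp) h)

lemma F_subset {n : ℕ} (w : Fin n → Bool) : F w ⊆ Finset.Icc 1 n := by
  intro s hs
  simp only [F, Finset.mem_image, Finset.mem_filter] at hs
  obtain ⟨i, _, rfl⟩ := hs
  have := i.isLt
  simp only [Finset.mem_Icc]
  omega

lemma mem_F {n : ℕ} (w : Fin n → Bool) (i : Fin n) : (n - i.val) ∈ F w ↔ w i = true := by
  simp only [F, Finset.mem_image, Finset.mem_filter, Finset.mem_univ, true_and]
  constructor
  · rintro ⟨j, hj, h⟩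
    have : j = i := F_inj (by simp) (by simp) h
    rwa [← this]
  · intro h; exact ⟨i, h, rfl⟩

def G (n : ℕ) (S : Finset ℕ) : Fin n → Bool := fun i => decide ((n - i.val) ∈ S)

lemma F_G {n : ℕ} (S : Finset ℕ) (hS : S ⊆ Finset.Icc 1 n) : F (G n S) = S := by
  ext s
  simp only [F, G, Finset.mem_image, Finset.mem_filter, Finset.mem_univ, true_and,
    decide_eq_true_eq]
  constructor
  · rintro ⟨i, hi, rfl⟩; exact hi
  · intro hs
    have hs' := hS hs
    simp only [Finset.mem_Icc] at hs'
    have h1 : n - (n - s) = s := by omega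
    exact ⟨⟨n - s, by omega⟩, by simpa [h1] using hs, by simpa using h1⟩

lemma G_F {n : ℕ} (w : Fin n → Bool) : G n (F w) = w := by
  funext i
  have := mem_F w i
  simp only [G]
  cases h : w i
  · simp [h] at this; simp [this]
  · simp [h] at this; simp [this]

lemma count_eq (n k : ℕ) (P : ℕ → Prop) [DecidablePred P] :
    (((Finset.Icc 1 n).powerset.filter (fun S => S.card = k ∧ P (S.sum id))).card
    = ((words n k).filter (fun w => P (inversions w + (k+1).choose 2))).card) := by
  classical
  apply Finset.card_bij' (fun S _ => G n S) (fun w _ => F w)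
  · intro S hS
    simp only [Finset.mem_filter, Finset.mem_powerset] at hS
    obtain ⟨hsub, hcard, hP⟩ := hS
    have hones : (Finset.univ.filter (fun i => G n S i = true)).card = k := by
      rw [← F_card (G n S), F_G S hsub, hcard]
    simp only [Finset.mem_filter, words, Finset.mem_univ, true_and]
    refine ⟨hones, ?_⟩
    rw [inv_key (G n S) hones, ← F_sum (G n S), F_G S hsub]
    exact hP
  · intro w hw
    simp only [Finset.mem_filter, words, Finset.mem_univ, true_and] at hw
    obtain ⟨hk, hP⟩ := hw
    simp only [Finset.mem_filter, Finset.mem_powerset]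
    refine ⟨F_subset w, by rw [F_card, hk], ?_⟩
    rw [F_sum, ← inv_key w hk]
    exact hP
  · intro S hS
    simp only [Finset.mem_filter, Finset.mem_powerset] at hS
    exact F_G S hS.1
  · intro w _
    exact G_F w

open Polynomial

lemma dvd_even_pow {m : ℕ} (h : Even m) : (X ^ 2 - 1 : Polynomial ℤ) ∣ X ^ m - 1 := by
  obtain ⟨t, ht⟩ := h
  have hm : X ^ m = ((X : Polynomial ℤ) ^ 2) ^ t := by
    rw [← pow_mul]; congr 1; omega
  rw [hm]
  simpa using sub_dvd_pow_sub_pow ((X : Polynomial ℤ) ^ 2) 1 t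

lemma dvd_odd_pow {m : ℕ} (h : Odd m) : (X ^ 2 - 1 : Polynomial ℤ) ∣ X ^ m - X := by
  obtain ⟨t, ht⟩ := h
  have hm : (X : Polynomial ℤ) ^ m - X = (((X : Polynomial ℤ) ^ 2) ^ t - 1) * X := by
    rw [ht, pow_add, pow_one, ← pow_mul]; ring
  rw [hm]
  exact Dvd.dvd.mul_right (by simpa using sub_dvd_pow_sub_pow ((X : Polynomial ℤ) ^ 2) 1 t) X


open Polynomial in
theorem stmt_15 (n k : ℕ) :
    (X ^ 2 - 1 : Polynomial ℤ) ∣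
      (X ^ ((k + 1).choose 2) * gaussBinom n k -
        (C (evenCount n k : ℤ) + C (oddCount n k : ℤ) * X)) := by
  classical
  set m : (Fin n → Bool) → ℕ := fun w => inversions w + (k + 1).choose 2 with hm
  set E := (words n k).filter (fun w => Even (m w)) with hE
  set O := (words n k).filter (fun w => ¬ Even (m w)) with hO
  have he : evenCount n k = E.card := count_eq n k Even
  have ho : oddCount n k = O.card := by
    have hO' : O = (words n k).filter (fun w => Odd (m w)) := by
      rw [hO]
      apply Finset.filter_congr
      intro w _
      simp [Nat.not_even_iff_odd]
    rw [hO']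
    exact count_eq n k Odd
  have hsum : X ^ ((k + 1).choose 2) * gaussBinom n k
      = ∑ w ∈ words n k, (X : Polynomial ℤ) ^ m w := by
    unfold gaussBinom
    rw [Finset.mul_sum]
    exact Finset.sum_congr rfl (fun w _ => by rw [← pow_add, add_comm])
  have hsplit : ∑ w ∈ words n k, (X : Polynomial ℤ) ^ m w
      = (∑ w ∈ E, (X : Polynomial ℤ) ^ m w) + (∑ w ∈ O, (X : Polynomial ℤ) ^ m w) :=
    (Finset.sum_filter_add_sum_filter_not _ _ _).symm
  have h1 : (C (evenCount n k : ℤ)) = ∑ _w ∈ E, (1 : Polynomial ℤ) := by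
    rw [Finset.sum_const, he]; simp
  have h2 : C (oddCount n k : ℤ) * X = ∑ _w ∈ O, (X : Polynomial ℤ) := by
    rw [Finset.sum_const, ho]; simp [nsmul_eq_mul, Polynomial.C_eq_natCast]
  rw [hsum, hsplit, h1, h2]
  have : (∑ w ∈ E, (X : Polynomial ℤ) ^ m w) + (∑ w ∈ O, (X : Polynomial ℤ) ^ m w)
      - ((∑ _w ∈ E, (1 : Polynomial ℤ)) + ∑ _w ∈ O, (X : Polynomial ℤ))
      = (∑ w ∈ E, ((X : Polynomial ℤ) ^ m w - 1)) + ∑ w ∈ O, ((X : Polynomial ℤ) ^ m w - X) := by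
    rw [Finset.sum_sub_distrib, Finset.sum_sub_distrib]
    ring
  rw [this]
  apply dvd_add
  · apply Finset.dvd_sum
    intro w hw
    rw [hE, Finset.mem_filter] at hw
    exact dvd_even_pow hw.2
  · apply Finset.dvd_sum
    intro w hw
    rw [hO, Finset.mem_filter] at hw
    exact dvd_odd_pow (Nat.not_even_iff_odd.1 hw.2)
end

section
/- L(n,k) = ([n choose k]_{q=1} + [n choose k]_{q=−1})/2, where [n choose k]_q is the Gaussian binomial coefficient. -/
open Finset

def Tc {n : ℕ} (w : Fin n → Bool) : ℕ :=
  (Finset.univ.filter (fun i => w i = true)).card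

def Ev (x : ℤ) (n k : ℕ) : ℤ := ∑ w ∈ words n k, x ^ inversions w

lemma Tc_snoc {n : ℕ} (w : Fin n → Bool) (b : Bool) :
    Tc (Fin.snoc w b) = Tc w + b.toNat := by
  simp only [Tc, Finset.card_filter]
  rw [Fin.sum_univ_castSucc]
  simp only [Fin.snoc_castSucc, Fin.snoc_last]
  cases b <;> simp

lemma inversions_snoc {n : ℕ} (w : Fin n → Bool) (b : Bool) :
    inversions (Fin.snoc w b) = inversions w + (if b then 0 else Tc w) := by
  have hnl : ∀ j : Fin n, ¬ (Fin.last n < j.castSucc) :=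
    fun j => not_lt.mpr (Fin.le_last _)
  simp only [inversions, Finset.card_filter, Tc]
  rw [Fintype.sum_prod_type]
  simp only [Fin.sum_univ_castSucc, Fin.snoc_castSucc, Fin.snoc_last,
    Fin.castSucc_lt_castSucc_iff, Fin.castSucc_lt_last, lt_irrefl, hnl,
    false_and, if_false, true_and, Finset.sum_const_zero, add_zero]
  rw [Finset.sum_add_distrib, Fintype.sum_prod_type]
  cases b <;> simp

def snocEquiv (n : ℕ) : (Fin n → Bool) × Bool ≃ (Fin (n + 1) → Bool) where
  toFun p := Fin.snoc p.1 p.2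
  invFun w := (Fin.init w, w (Fin.last n))
  left_inv p := by simp
  right_inv w := by simp

lemma Ev_eq_sum (x : ℤ) (n k : ℕ) :
    Ev x n k = ∑ w : Fin n → Bool, if Tc w = k then x ^ inversions w else 0 := by
  simp [Ev, words, Tc, Finset.sum_filter]
  rfl

lemma Ev_split (x : ℤ) (n k : ℕ) :
    Ev x (n + 1) k =
      (∑ w : Fin n → Bool, if Tc w = k then x ^ (inversions w + Tc w) else 0) +
      (∑ w : Fin n → Bool, if Tc w + 1 = k then x ^ inversions w else 0) := by
  rw [Ev_eq_sum, ← Equiv.sum_comp (snocEquiv n)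
    (fun w => if Tc w = k then x ^ inversions w else 0)]
  rw [Fintype.sum_prod_type]
  simp only [snocEquiv, Equiv.coe_fn_mk, Fintype.sum_bool, Tc_snoc, inversions_snoc]
  rw [Finset.sum_add_distrib]
  simp [add_comm]

lemma Ev_succ (x : ℤ) (n k : ℕ) :
    Ev x (n + 1) (k + 1) = x ^ (k + 1) * Ev x n (k + 1) + Ev x n k := by
  rw [Ev_split, Ev_eq_sum, Ev_eq_sum, Finset.mul_sum]
  congr 1
  · apply Finset.sum_congr rfl
    intro w _
    split_ifs with h
    · rw [h, pow_add, mul_comm]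
    · ring
  · simp

lemma Ev_succ_zero (x : ℤ) (n : ℕ) : Ev x (n + 1) 0 = Ev x n 0 := by
  rw [Ev_split, Ev_eq_sum]
  have : ∀ w : Fin n → Bool, (if Tc w + 1 = 0 then x ^ inversions w else 0) = 0 := by
    intro w; simp
  rw [Finset.sum_congr rfl (fun w _ => this w), Finset.sum_const_zero, add_zero]
  apply Finset.sum_congr rfl
  intro w _
  split_ifs with h
  · rw [h, add_zero]
  · rfl

lemma Ev_zero_succ (x : ℤ) (k : ℕ) : Ev x 0 (k + 1) = 0 := by
  rw [Ev_eq_sum]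
  apply Finset.sum_eq_zero
  intro w _
  have : Tc w = 0 := by simp [Tc]
  simp [this]

lemma Ev_zero_zero (x : ℤ) : Ev x 0 0 = 1 := by
  rw [Ev_eq_sum]
  rw [Fintype.sum_eq_single (fun _ => false)]
  · have : Tc (fun _ : Fin 0 => false) = 0 := by simp [Tc]
    simp [this, inversions]
  · intro w hw
    exact absurd (funext fun i => i.elim0) hw

lemma Ev_zero (x : ℤ) (n : ℕ) : Ev x n 0 = 1 := by
  induction n with
  | zero => exact Ev_zero_zero x
  | succ n ih => rw [Ev_succ_zero, ih]

lemma Ev_one (n k : ℕ) : Ev 1 n k = (n.choose k : ℤ) := by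
  induction n generalizing k with
  | zero =>
    cases k with
    | zero => simp [Ev_zero_zero]
    | succ k => simp [Ev_zero_succ]
  | succ n ih =>
    cases k with
    | zero => simp [Ev_zero]
    | succ k =>
      rw [Ev_succ, ih, ih, Nat.choose_succ_succ]
      push_cast
      ring

lemma Ev_neg_one_sq (k : ℕ) : ((-1 : ℤ) ^ k) * ((-1 : ℤ) ^ k) = 1 := by
  rw [← pow_add]
  exact Even.neg_one_pow ⟨k, by ring⟩

lemma E_two_step_s16 (n k : ℕ) :
    Ev (-1) (n + 2) (k + 2) = Ev (-1) n (k + 2) + Ev (-1) n k := by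
  rw [show n + 2 = (n + 1) + 1 from rfl, Ev_succ, Ev_succ, Ev_succ]
  have h1 : ((-1 : ℤ) ^ (k + 1 + 1)) = -((-1 : ℤ) ^ (k + 1)) := by
    rw [pow_succ]; ring
  rw [h1]
  have h2 := Ev_neg_one_sq (k + 1)
  linear_combination Ev (-1) n (k + 1 + 1) * h2

lemma E_two_step_one (n : ℕ) : Ev (-1) (n + 2) 1 = Ev (-1) n 1 := by
  rw [show n + 2 = (n + 1) + 1 from rfl,
    show (1 : ℕ) = 0 + 1 from rfl, Ev_succ, Ev_succ, Ev_succ_zero, Ev_zero]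
  ring

lemma E_two_step_zero (n : ℕ) : Ev (-1) (n + 2) 0 = Ev (-1) n 0 := by
  rw [Ev_succ_zero, Ev_succ_zero]

lemma Ev_one_big (x : ℤ) (k : ℕ) : Ev x 1 (k + 2) = 0 := by
  rw [show k + 2 = (k + 1) + 1 from rfl, Ev_succ, Ev_zero_succ, Ev_zero_succ]
  ring

lemma key : ∀ n k : ℕ, 2 * (losanitsch n k : ℤ) = Ev 1 n k + Ev (-1) n k := by
  intro n
  induction n using Nat.strong_induction_on with
  | _ n ih =>
    match n with
    | 0 =>
      intro k
      cases k with
      | zero => simp [losanitsch, Ev_zero_zero]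
      | succ k => simp [losanitsch, Ev_zero_succ]
    | 1 =>
      intro k
      match k with
      | 0 => simp [losanitsch, Ev_zero]
      | 1 =>
        have h : ∀ x : ℤ, Ev x 1 1 = 1 := by
          intro x
          rw [show (1 : ℕ) = 0 + 1 from rfl, Ev_succ, Ev_zero_succ, Ev_zero_zero]
          ring
        simp [losanitsch, h]
      | (k + 2) =>
        have : ¬ (k + 2 ≤ 1) := by omega
        simp [losanitsch, this, Ev_one_big]
    | (n + 2) =>
      intro k
      have ihn := ih n (by omega)
      match k with
      | 0 =>
        have h0 := ihn 0
        rw [Ev_one, E_two_step_zero, Ev_zero]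
        rw [Ev_one, Ev_zero] at h0
        simp only [losanitsch]
        simp only [Nat.choose_zero_right] at h0 ⊢
        simp only [if_pos rfl, show ¬ (2 ≤ 0) by omega, if_neg, add_zero]
        push_cast
        push_cast at h0
        omega
      | 1 =>
        have h1 := ihn 1
        rw [Ev_one, E_two_step_one]
        rw [Ev_one] at h1
        simp only [losanitsch, show (1:ℕ) ≠ 0 by omega, if_neg, show ¬ (2 ≤ 1) by omega,
          add_zero, show (1:ℕ) - 1 = 0 from rfl, Nat.choose_zero_right]
        simp only [Nat.choose_one_right] at h1 ⊢
        push_cast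
        linarith
      | (k + 2) =>
        have hk := ihn k
        have hk2 := ihn (k + 2)
        rw [Ev_one, E_two_step_s16]
        rw [Ev_one] at hk
        rw [Ev_one] at hk2
        simp only [losanitsch]
        have hc : ((n + 2).choose (k + 2) : ℤ) =
            (n.choose (k + 2) : ℤ) + 2 * (n.choose (k + 1) : ℤ) + (n.choose k : ℤ) := by
          simp only [show n + 2 = (n + 1) + 1 from rfl, Nat.choose_succ_succ,
            Nat.succ_eq_add_one]
          push_cast
          ring
        simp only [show k + 2 ≠ 0 by omega, if_neg, if_pos (show 2 ≤ k + 2 by omega),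
          show k + 2 - 1 = k + 1 from rfl, show k + 2 - 2 = k from rfl]
        push_cast
        linarith

lemma eval_gaussBinom (x : ℤ) (n k : ℕ) : (gaussBinom n k).eval x = Ev x n k := by
  simp [gaussBinom, Ev, Polynomial.eval_finset_sum]

theorem stmt_16 (n k : ℕ) :
    2 * (losanitsch n k : ℤ) =
      (gaussBinom n k).eval 1 + (gaussBinom n k).eval (-1) := by
  rw [eval_gaussBinom, eval_gaussBinom]
  exact key n k
end

section
/- For a prime p, all residue classes are equidistributed among k-subsets of {1,...,p} for 1 ≤ k ≤ p−1: the number of k-subsets of {1,...,p} whose element sum is congruent to j modulo p equals C(p,k)/p, independently of j. -/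
open Finset

theorem stmt_18 (p k : ℕ) (hp : p.Prime) (hk1 : 1 ≤ k) (hk2 : k ≤ p - 1) (j : ℕ) :
    p * ((Finset.Icc 1 p).powerset.filter
          (fun S => S.card = k ∧ S.sum id % p = j % p)).card = p.choose k := by
  haveI : Fact p.Prime := ⟨hp⟩
  haveI : NeZero p := ⟨hp.pos.ne'⟩
  set N : ZMod p → ℕ := fun a =>
    ((univ.powersetCard k).filter (fun T : Finset (ZMod p) => T.sum id = a)).card with hN
  set g : ZMod p → ℕ := fun t => if t.val = 0 then p else t.val with hg
  have hg1 : ∀ t : ZMod p, ((g t : ℕ) : ZMod p) = t := by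
    intro t
    simp only [hg]
    split
    · rename_i h
      rw [ZMod.natCast_self]
      exact ((ZMod.val_eq_zero t).mp h).symm
    · exact ZMod.natCast_zmod_val t
  have hg2 : ∀ t : ZMod p, g t ∈ Finset.Icc 1 p := by
    intro t
    have := ZMod.val_lt t
    rcases eq_or_ne t.val 0 with h | h
    · simp only [hg, if_pos h, Finset.mem_Icc]; omega
    · simp only [hg, if_neg h, Finset.mem_Icc]; omega
  have hginj : Function.Injective g := by
    intro a b hab
    have := hg1 a
    rw [hab, hg1 b] at this
    exact this.symm
  have hgc : ∀ x ∈ Finset.Icc 1 p, g ((x : ℕ) : ZMod p) = x := by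
    intro x hx
    simp only [Finset.mem_Icc] at hx
    simp only [hg, ZMod.val_natCast]
    rcases eq_or_lt_of_le hx.2 with h | h
    · rw [h, Nat.mod_self]; simp
    · rw [Nat.mod_eq_of_lt h, if_neg (by omega)]
  have hinj : ∀ S ⊆ Finset.Icc 1 p, Set.InjOn (Nat.cast : ℕ → ZMod p) S := by
    intro S hS x hx y hy hxy
    have hx' := hS hx; have hy' := hS hy
    have := hgc x hx'
    rw [hxy, hgc y hy'] at this
    exact this.symm
  have step1 : ((Finset.Icc 1 p).powerset.filter
      (fun S => S.card = k ∧ S.sum id % p = j % p)).card = N ((j : ℕ) : ZMod p) := by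
    rw [hN]
    apply Finset.card_nbij' (fun S => S.image (Nat.cast : ℕ → ZMod p))
      (fun T => T.image g)
    · intro S hS
      simp only [Finset.mem_coe, Finset.mem_filter, Finset.mem_powerset] at hS
      obtain ⟨hsub, hcard, hsum⟩ := hS
      simp only [Finset.mem_coe, Finset.mem_filter, Finset.mem_powersetCard_univ]
      constructor
      · rw [Finset.card_image_of_injOn (hinj S hsub)]; exact hcard
      · rw [Finset.sum_image (fun x hx y hy => hinj S hsub hx hy)]
        simp only [id_eq]
        rw [← Nat.cast_sum, ZMod.natCast_eq_natCast_iff']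
        simpa using hsum
    · intro T hT
      simp only [Finset.mem_coe, Finset.mem_filter, Finset.mem_powersetCard_univ] at hT
      obtain ⟨hcard, hsum⟩ := hT
      simp only [Finset.mem_coe, Finset.mem_filter, Finset.mem_powerset]
      refine ⟨fun x hx => ?_, ?_, ?_⟩
      · obtain ⟨t, _, rfl⟩ := Finset.mem_image.mp hx
        exact hg2 t
      · rw [Finset.card_image_of_injective _ hginj]; exact hcard
      · rw [← ZMod.natCast_eq_natCast_iff']
        have : (((T.image g).sum id : ℕ) : ZMod p) = ∑ t ∈ T, ((g t : ℕ) : ZMod p) := by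
          rw [Finset.sum_image (fun x _ y _ h => hginj h)]
          simp [Nat.cast_sum]
        rw [this]
        calc ∑ t ∈ T, ((g t : ℕ) : ZMod p) = ∑ t ∈ T, t := by
              exact Finset.sum_congr rfl (fun t _ => hg1 t)
          _ = ((j : ℕ) : ZMod p) := hsum
    · intro S hS
      simp only [Finset.mem_coe, Finset.mem_filter, Finset.mem_powerset] at hS
      beta_reduce
      rw [Finset.image_image]
      rw [show (g ∘ (Nat.cast : ℕ → ZMod p)) = fun x => g ((x : ℕ) : ZMod p) from rfl]
      rw [Finset.image_congr (fun x hx => hgc x (hS.1 hx)), Finset.image_id']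
    · intro T hT
      beta_reduce
      rw [Finset.image_image]
      have : ((Nat.cast : ℕ → ZMod p) ∘ g) = id := funext hg1
      rw [this, Finset.image_id]
  have hkne : (k : ZMod p) ≠ 0 := by
    rw [Ne, ZMod.natCast_eq_zero_iff]
    intro hdvd
    have := Nat.le_of_dvd (by omega) hdvd
    omega
  have step2 : ∀ a b : ZMod p, N a = N b := by
    intro a b
    set c : ZMod p := (b - a) / k with hc
    have hbc : a + k * c = b := by
      rw [hc, mul_comm, div_mul_cancel₀ _ hkne]; ring
    rw [hN]
    apply Finset.card_nbij' (fun T => T.image (· + c)) (fun T => T.image (· - c))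
    · intro T hT
      simp only [Finset.mem_coe, Finset.mem_filter, Finset.mem_powersetCard_univ] at hT ⊢
      obtain ⟨hcard, hsum⟩ := hT
      constructor
      · rw [Finset.card_image_of_injective _ (add_left_injective c)]; exact hcard
      · rw [Finset.sum_image (fun x _ y _ h => by exact add_right_cancel h)]
        simp only [id_eq] at hsum ⊢
        rw [Finset.sum_add_distrib, hsum, Finset.sum_const, hcard, nsmul_eq_mul]
        exact hbc
    · intro T hT
      simp only [Finset.mem_coe, Finset.mem_filter, Finset.mem_powersetCard_univ] at hT ⊢
      obtain ⟨hcard, hsum⟩ := hT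
      constructor
      · rw [Finset.card_image_of_injective _ (sub_left_injective)]; exact hcard
      · rw [Finset.sum_image (fun x _ y _ h => by exact sub_left_injective h)]
        simp only [id_eq, sub_eq_add_neg] at hsum ⊢
        rw [Finset.sum_add_distrib, hsum, Finset.sum_const, hcard, nsmul_eq_mul]
        rw [← hbc]; ring
    · intro T hT
      beta_reduce
      rw [Finset.image_image]
      have : ((· - c) ∘ (· + c)) = (id : ZMod p → ZMod p) := by
        funext x; simp
      rw [this, Finset.image_id]
    · intro T hT
      beta_reduce
      rw [Finset.image_image]
      have : ((· + c) ∘ (· - c)) = (id : ZMod p → ZMod p) := by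
        funext x; simp
      rw [this, Finset.image_id]
  have step3 : ∑ a : ZMod p, N a = p.choose k := by
    rw [hN]
    rw [← Finset.card_eq_sum_card_fiberwise
      (fun T (_ : T ∈ univ.powersetCard k) => Finset.mem_univ (T.sum id))]
    rw [Finset.card_powersetCard, Finset.card_univ, ZMod.card]
  have : ∑ a : ZMod p, N a = p * N ((j : ℕ) : ZMod p) := by
    rw [Finset.sum_congr rfl (fun a _ => step2 a ((j : ℕ) : ZMod p))]
    rw [Finset.sum_const, Finset.card_univ, ZMod.card, smul_eq_mul]
  rw [step1, ← this, step3]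
end
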